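/- arXiv:2208.11286 — 5 statements merged into one kernel-verified Lean document; each statement's English description precedes it below -/
import Mathlib

section
/- There exists a universal constant C > 0 such that the following holds for all positive integers n and d. Given vectors a_1, ..., a_n in ℝ^d each satisfying ‖a_i‖_∞ ≤ 1, there exist signs x_1, ..., x_n ∈ {−1, +1} such that ‖∑_{i=1}^n x_i a_i‖_∞ ≤ C · √n · max{1, √(log(d/n))}. -/
set_option linter.unusedSectionVars false
set_option maxHeartbeats 1000000

open Finset Real

namespace SpencerEnt

variable {Ω : Type*} [Fintype Ω] [DecidableEq Ω] [Nonempty Ω]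

/-- fiber of f at v -/
def fib {V : Type*} [DecidableEq V] (f : Ω → V) (v : V) : Finset Ω :=
  univ.filter (fun ω => f ω = v)

/-- probability of value v -/
noncomputable def pr {V : Type*} [DecidableEq V] (f : Ω → V) (v : V) : ℝ :=
  (fib f v).card / (Fintype.card Ω : ℝ)

/-- Shannon entropy (nats) of f under uniform measure -/
noncomputable def ent {V : Type*} [DecidableEq V] (f : Ω → V) : ℝ :=
  ∑ v ∈ univ.image f, Real.negMulLog (pr f v)

variable {V W : Type*} [DecidableEq V] [DecidableEq W]

lemma cardΩ_pos : (0:ℝ) < (Fintype.card Ω : ℝ) := by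
  exact_mod_cast Fintype.card_pos

lemma pr_nonneg (f : Ω → V) (v : V) : 0 ≤ pr f v :=
  div_nonneg (by positivity) (le_of_lt cardΩ_pos)

lemma pr_pos {f : Ω → V} {v : V} (hv : v ∈ univ.image f) : 0 < pr f v := by
  rcases mem_image.1 hv with ⟨ω, -, rfl⟩
  apply div_pos _ cardΩ_pos
  have : ω ∈ fib f (f ω) := by simp [fib]
  exact_mod_cast card_pos.2 ⟨ω, this⟩

lemma sum_card_fib (f : Ω → V) :
    ∑ v ∈ univ.image f, (fib f v).card = Fintype.card Ω := by
  rw [← Finset.card_univ]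
  exact (Finset.card_eq_sum_card_fiberwise (fun x _ => mem_image_of_mem f (mem_univ x))).symm

lemma sum_pr (f : Ω → V) : ∑ v ∈ univ.image f, pr f v = 1 := by
  unfold pr
  rw [← Finset.sum_div]
  rw [div_eq_one_iff_eq (ne_of_gt cardΩ_pos)]
  exact_mod_cast sum_card_fib f

lemma pr_le_one (f : Ω → V) (v : V) : pr f v ≤ 1 := by
  unfold pr
  rw [div_le_one cardΩ_pos]
  exact_mod_cast Finset.card_le_card (Finset.filter_subset _ _)

lemma ent_nonneg (f : Ω → V) : 0 ≤ ent f := by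
  apply Finset.sum_nonneg
  intro v hv
  exact Real.negMulLog_nonneg (pr_nonneg f v) (pr_le_one f v)

/-- there is a fiber of size at least `N e^{-H}` -/
lemma exists_big_fiber (f : Ω → V) :
    ∃ v, (Fintype.card Ω : ℝ) * Real.exp (-ent f) ≤ (fib f v).card := by
  obtain ⟨ω⟩ := ‹Nonempty Ω›
  have hne : (univ.image f).Nonempty := ⟨f ω, mem_image_of_mem f (mem_univ ω)⟩
  obtain ⟨v, hv, hmax⟩ := Finset.exists_max_image (univ.image f) (pr f) hne
  refine ⟨v, ?_⟩
  have hpv : 0 < pr f v := pr_pos hv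
  have h1 : ent f ≥ -Real.log (pr f v) := by
    have : ∀ w ∈ univ.image f, pr f w * (-Real.log (pr f v)) ≤ Real.negMulLog (pr f w) := by
      intro w hw
      have hw0 : 0 < pr f w := pr_pos hw
      rw [Real.negMulLog, neg_mul, mul_neg]
      apply neg_le_neg
      exact mul_le_mul_of_nonneg_left (Real.log_le_log hw0 (hmax w hw)) (le_of_lt hw0)
    calc ent f ≥ ∑ w ∈ univ.image f, pr f w * (-Real.log (pr f v)) :=
          Finset.sum_le_sum this
      _ = -Real.log (pr f v) := by rw [← Finset.sum_mul, sum_pr, one_mul]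
  have h2 : Real.exp (-ent f) ≤ pr f v := by
    calc Real.exp (-ent f) ≤ Real.exp (Real.log (pr f v)) := by
          apply Real.exp_le_exp.2; linarith
      _ = pr f v := Real.exp_log hpv
  have := mul_le_mul_of_nonneg_left h2 (le_of_lt (cardΩ_pos (Ω := Ω)))
  calc (Fintype.card Ω : ℝ) * Real.exp (-ent f) ≤ (Fintype.card Ω : ℝ) * pr f v := this
    _ = (fib f v).card := by unfold pr; have := (cardΩ_pos (Ω := Ω)).ne'; field_simp

/-- fiber cards of a composition decompose -/
lemma card_fib_comp (φ : V → W) (f : Ω → V) (w : W) :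
    (fib (φ ∘ f) w).card
      = ∑ v ∈ (univ.image f).filter (fun v => φ v = w), (fib f v).card := by
  have h := Finset.card_eq_sum_card_fiberwise
    (f := f) (s := fib (φ ∘ f) w) (t := (univ.image f).filter (fun v => φ v = w))
    (by intro ω hω
        simp only [fib, Finset.mem_coe, mem_filter, mem_univ, true_and, Function.comp] at hω
        simp [mem_image_of_mem f (mem_univ ω), hω])
  rw [h]
  apply Finset.sum_congr rfl
  intro v hv
  simp only [mem_filter] at hv
  congr 1
  ext ω
  simp only [fib, mem_filter, mem_univ, true_and, Function.comp]
  constructor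
  · rintro ⟨-, h2⟩; exact h2
  · rintro rfl; exact ⟨hv.2, rfl⟩

lemma pr_comp (φ : V → W) (f : Ω → V) (w : W) :
    pr (φ ∘ f) w = ∑ v ∈ (univ.image f).filter (fun v => φ v = w), pr f v := by
  unfold pr
  rw [← Finset.sum_div, card_fib_comp φ f w]
  norm_cast

/-- data processing: entropy decreases under maps -/
lemma ent_comp_le (φ : V → W) (f : Ω → V) : ent (φ ∘ f) ≤ ent f := by
  unfold ent
  have himg : univ.image (φ ∘ f) = (univ.image f).image φ := by
    rw [Finset.image_image]
  rw [← Finset.sum_fiberwise_of_maps_to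
    (g := φ) (t := univ.image (φ ∘ f))
    (fun v hv => by
      rcases mem_image.1 hv with ⟨ω, -, rfl⟩
      exact mem_image_of_mem _ (mem_univ ω))
    (fun v => Real.negMulLog (pr f v))]
  apply Finset.sum_le_sum
  intro w hw
  rw [pr_comp φ f w]
  -- negMulLog of a sum of positives ≤ sum of negMulLogs
  set t := (univ.image f).filter (fun v => φ v = w) with ht
  have hpos : ∀ v ∈ t, 0 < pr f v := fun v hv => pr_pos (mem_filter.1 hv).1
  have hle : ∀ v ∈ t, pr f v ≤ ∑ u ∈ t, pr f u := by
    intro v hv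
    exact Finset.single_le_sum (fun u hu => le_of_lt (hpos u hu)) hv
  have hS : (∑ v ∈ t, pr f v) * Real.log (∑ v ∈ t, pr f v)
      = ∑ v ∈ t, pr f v * Real.log (∑ u ∈ t, pr f u) := Finset.sum_mul ..
  rw [Real.negMulLog, neg_mul, hS, ← Finset.sum_neg_distrib]
  apply Finset.sum_le_sum
  intro v hv
  rw [Real.negMulLog, neg_mul]
  apply neg_le_neg
  exact mul_le_mul_of_nonneg_left
    (Real.log_le_log (hpos v hv) (hle v hv)) (le_of_lt (hpos v hv))


/-- entropy of composition, rewritten as a sum over the original values -/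
lemma ent_comp_eq (φ : V → W) (f : Ω → V) :
    ent (φ ∘ f) = ∑ v ∈ univ.image f, pr f v * (-Real.log (pr (φ ∘ f) (φ v))) := by
  rw [← Finset.sum_fiberwise_of_maps_to
    (g := φ) (t := univ.image (φ ∘ f))
    (fun v hv => by
      rcases mem_image.1 hv with ⟨ω, -, rfl⟩
      exact mem_image_of_mem _ (mem_univ ω))
    (fun v => pr f v * (-Real.log (pr (φ ∘ f) (φ v))))]
  unfold ent
  apply Finset.sum_congr rfl
  intro w hw
  have : ∀ v ∈ (univ.image f).filter (fun v => φ v = w),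
      pr f v * (-Real.log (pr (φ ∘ f) (φ v))) = pr f v * (-Real.log (pr (φ ∘ f) w)) := by
    intro v hv
    rw [(mem_filter.1 hv).2]
  rw [Finset.sum_congr rfl this, ← Finset.sum_mul, ← pr_comp]
  rw [Real.negMulLog, neg_mul, mul_neg]

/-- subadditivity for pairs -/
lemma ent_pair_le (f : Ω → V) (g : Ω → W) :
    ent (fun ω => (f ω, g ω)) ≤ ent f + ent g := by
  set pa : Ω → V × W := fun ω => (f ω, g ω) with hpa
  have hf : f = Prod.fst ∘ pa := rfl
  have hg : g = Prod.snd ∘ pa := rfl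
  have hAf : ent f = ∑ q ∈ univ.image pa, pr pa q * (-Real.log (pr f q.1)) := by
    rw [hf, ent_comp_eq Prod.fst pa]
  have hAg : ent g = ∑ q ∈ univ.image pa, pr pa q * (-Real.log (pr g q.2)) := by
    rw [hg, ent_comp_eq Prod.snd pa]
  have hfq : ∀ q ∈ univ.image pa, 0 < pr f q.1 := by
    intro q hq
    rcases mem_image.1 hq with ⟨ω, -, rfl⟩
    exact pr_pos (mem_image_of_mem f (mem_univ ω))
  have hgq : ∀ q ∈ univ.image pa, 0 < pr g q.2 := by
    intro q hq
    rcases mem_image.1 hq with ⟨ω, -, rfl⟩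
    exact pr_pos (mem_image_of_mem g (mem_univ ω))
  rw [hAf, hAg, ← Finset.sum_add_distrib]
  unfold ent
  have key : ∀ q ∈ univ.image pa,
      Real.negMulLog (pr pa q)
        ≤ pr pa q * (-Real.log (pr f q.1)) + pr pa q * (-Real.log (pr g q.2))
          + (pr f q.1 * pr g q.2 - pr pa q) := by
    intro q hq
    have hp : 0 < pr pa q := pr_pos hq
    have h1 : 0 < pr f q.1 := hfq q hq
    have h2 : 0 < pr g q.2 := hgq q hq
    have hlog : Real.log (pr f q.1 * pr g q.2 / pr pa q)
        ≤ pr f q.1 * pr g q.2 / pr pa q - 1 :=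
      Real.log_le_sub_one_of_pos (by positivity)
    have hexp : Real.log (pr f q.1 * pr g q.2 / pr pa q)
        = Real.log (pr f q.1) + Real.log (pr g q.2) - Real.log (pr pa q) := by
      rw [Real.log_div (by positivity) (ne_of_gt hp),
          Real.log_mul (ne_of_gt h1) (ne_of_gt h2)]
    have := mul_le_mul_of_nonneg_left hlog (le_of_lt hp)
    rw [hexp] at this
    have hdiv : pr pa q * (pr f q.1 * pr g q.2 / pr pa q - 1)
        = pr f q.1 * pr g q.2 - pr pa q := by
      field_simp
    rw [hdiv] at this
    rw [Real.negMulLog, neg_mul]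
    nlinarith [this]
  calc ∑ q ∈ univ.image pa, Real.negMulLog (pr pa q)
      ≤ ∑ q ∈ univ.image pa,
          (pr pa q * (-Real.log (pr f q.1)) + pr pa q * (-Real.log (pr g q.2))
            + (pr f q.1 * pr g q.2 - pr pa q)) := Finset.sum_le_sum key
    _ = (∑ q ∈ univ.image pa,
          (pr pa q * (-Real.log (pr f q.1)) + pr pa q * (-Real.log (pr g q.2))))
          + ((∑ q ∈ univ.image pa, pr f q.1 * pr g q.2) - 1) := by
        rw [Finset.sum_add_distrib, Finset.sum_sub_distrib, sum_pr]
    _ ≤ ∑ q ∈ univ.image pa,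
          (pr pa q * (-Real.log (pr f q.1)) + pr pa q * (-Real.log (pr g q.2))) := by
        have hsub : univ.image pa ⊆ (univ.image f) ×ˢ (univ.image g) := by
          intro q hq
          rcases mem_image.1 hq with ⟨ω, -, rfl⟩
          exact Finset.mem_product.2
            ⟨mem_image_of_mem f (mem_univ ω), mem_image_of_mem g (mem_univ ω)⟩
        have : (∑ q ∈ univ.image pa, pr f q.1 * pr g q.2)
            ≤ ∑ q ∈ (univ.image f) ×ˢ (univ.image g), pr f q.1 * pr g q.2 := by
          apply Finset.sum_le_sum_of_subset_of_nonneg hsub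
          intro q _ _
          exact mul_nonneg (pr_nonneg f q.1) (pr_nonneg g q.2)
        have hprod : ∑ q ∈ (univ.image f) ×ˢ (univ.image g), pr f q.1 * pr g q.2 = 1 := by
          rw [Finset.sum_product, ← Finset.sum_mul_sum, sum_pr, sum_pr, one_mul]
        linarith

lemma ent_const (c : V) : ent (fun _ : Ω => c) = 0 := by
  unfold ent
  have : univ.image (fun _ : Ω => c) = {c} :=
    Finset.image_const Finset.univ_nonempty c
  rw [this, Finset.sum_singleton]
  have : pr (fun _ : Ω => c) c = 1 := by
    unfold pr fib
    rw [Finset.filter_true_of_mem (fun ω _ => rfl)]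
    rw [Finset.card_univ, div_self (ne_of_gt cardΩ_pos)]
  rw [this, Real.negMulLog_one]

lemma ent_congr {f g : Ω → V} (h : f = g) : ent f = ent g := by rw [h]

/-- subadditivity of entropy for finitely many functions -/
lemma ent_joint_le {J : Type*} [Fintype J] [DecidableEq J] [Inhabited V] (Y : J → Ω → V) :
    ent (fun ω j => Y j ω) ≤ ∑ j, ent (Y j) := by
  have aux : ∀ s : Finset J,
      ent (fun ω j => if j ∈ s then Y j ω else default) ≤ ∑ j ∈ s, ent (Y j) := by
    intro s
    induction s using Finset.induction_on with
    | empty =>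
        simp only [Finset.notMem_empty, if_false, Finset.sum_empty]
        rw [show (fun (_ : Ω) (_ : J) => (default : V)) = (fun _ => fun _ => default) from rfl,
          ent_const]
    | @insert a s ha ih =>
        have hfun : (fun ω j => if j ∈ insert a s then Y j ω else default)
            = (fun p : V × (J → V) => Function.update p.2 a p.1)
              ∘ (fun ω => (Y a ω, fun j => if j ∈ s then Y j ω else default)) := by
          funext ω
          funext j
          simp only [Function.comp_apply, Function.update]
          by_cases hj : j = a
          · subst hj; simp
          · simp [hj, Finset.mem_insert]
        rw [ent_congr hfun, Finset.sum_insert ha]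
        calc ent ((fun p : V × (J → V) => Function.update p.2 a p.1)
              ∘ (fun ω => (Y a ω, fun j => if j ∈ s then Y j ω else default)))
            ≤ ent (fun ω => (Y a ω, fun j => if j ∈ s then Y j ω else default)) :=
              ent_comp_le _ _
          _ ≤ ent (Y a) + ent (fun ω j => if j ∈ s then Y j ω else default) :=
              ent_pair_le _ _
          _ ≤ ent (Y a) + ∑ j ∈ s, ent (Y j) := by linarith [ih]
  have := aux Finset.univ
  have hfun : (fun ω j => if j ∈ (Finset.univ : Finset J) then Y j ω else default)
      = (fun ω j => Y j ω) := by
    funext ω j; simp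
  rwa [ent_congr hfun] at this

/-- there is a joint bucket of size `≥ N exp(-∑ Hⱼ)` -/
lemma exists_big_joint_fiber {J : Type*} [Fintype J] [DecidableEq J] [Inhabited V]
    (Y : J → Ω → V) :
    ∃ b : J → V, (Fintype.card Ω : ℝ) * Real.exp (-∑ j, ent (Y j))
      ≤ ((univ.filter fun ω => ∀ j, Y j ω = b j).card : ℝ) := by
  obtain ⟨b, hb⟩ := exists_big_fiber (fun ω j => Y j ω)
  refine ⟨b, ?_⟩
  have h1 : Real.exp (-∑ j, ent (Y j)) ≤ Real.exp (-ent (fun ω j => Y j ω)) := by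
    apply Real.exp_le_exp.2
    exact neg_le_neg (ent_joint_le Y)
  have h2 : fib (fun ω j => Y j ω) b = univ.filter fun ω => ∀ j, Y j ω = b j := by
    unfold fib
    apply Finset.filter_congr
    intro ω _
    simp [funext_iff]
  calc (Fintype.card Ω : ℝ) * Real.exp (-∑ j, ent (Y j))
      ≤ (Fintype.card Ω : ℝ) * Real.exp (-ent (fun ω j => Y j ω)) := by
        apply mul_le_mul_of_nonneg_left h1 (le_of_lt cardΩ_pos)
    _ ≤ ((fib (fun ω j => Y j ω) b).card : ℝ) := hb
    _ = _ := by rw [h2]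

end SpencerEnt

namespace SpencerProof

open Finset Real SpencerEnt

/-- sign of a boolean, as a real -/
def sgn (b : Bool) : ℝ := if b then 1 else -1

lemma sgn_sq (b : Bool) : sgn b * sgn b = 1 := by cases b <;> simp [sgn]

lemma abs_sgn (b : Bool) : |sgn b| = 1 := by cases b <;> simp [sgn]

/-- MGF bound for Rademacher-type sums -/
lemma sum_exp_le (n : ℕ) (a : Fin n → ℝ) (ha : ∀ i, |a i| ≤ 1) (h : ℝ) :
    ∑ x : Fin n → Bool, Real.exp (h * ∑ i, a i * sgn (x i))
      ≤ (2 ^ n : ℝ) * Real.exp (h ^ 2 * n / 2) := by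
  have hrw : ∀ x : Fin n → Bool,
      Real.exp (h * ∑ i, a i * sgn (x i)) = ∏ i, Real.exp (h * a i * sgn (x i)) := by
    intro x
    rw [Finset.mul_sum, Real.exp_sum]
    apply Finset.prod_congr rfl
    intro i _
    ring_nf
  have hswap : ∑ x : Fin n → Bool, ∏ i, Real.exp (h * a i * sgn (x i))
      = ∏ i, ∑ b : Bool, Real.exp (h * a i * sgn b) := by
    rw [Finset.prod_univ_sum]
    rw [Fintype.piFinset_univ]
  have hbound : ∀ i : Fin n, ∑ b : Bool, Real.exp (h * a i * sgn b)
      ≤ 2 * Real.exp (h ^ 2 / 2) := by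
    intro i
    have : ∑ b : Bool, Real.exp (h * a i * sgn b)
        = Real.exp (h * a i) + Real.exp (-(h * a i)) := by
      rw [Fintype.sum_bool]
      simp [sgn, mul_comm]
    rw [this]
    have hcosh := Real.cosh_le_exp_half_sq (h * a i)
    rw [Real.cosh_eq] at hcosh
    have h1 : Real.exp (h * a i) + Real.exp (-(h * a i))
        ≤ 2 * Real.exp ((h * a i) ^ 2 / 2) := by linarith
    have h2 : (h * a i) ^ 2 ≤ h ^ 2 := by
      have hai := abs_le.1 (ha i)
      have ha2 : a i ^ 2 ≤ 1 := by nlinarith [hai.1, hai.2]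
      nlinarith [mul_nonneg (sq_nonneg h) (sub_nonneg.2 ha2)]
    have h3 : Real.exp ((h * a i) ^ 2 / 2) ≤ Real.exp (h ^ 2 / 2) :=
      Real.exp_le_exp.2 (by linarith)
    linarith
  calc ∑ x : Fin n → Bool, Real.exp (h * ∑ i, a i * sgn (x i))
      = ∏ i, ∑ b : Bool, Real.exp (h * a i * sgn b) := by
        rw [Finset.sum_congr rfl (fun x _ => hrw x), hswap]
    _ ≤ ∏ _i : Fin n, (2 * Real.exp (h ^ 2 / 2)) := by
        apply Finset.prod_le_prod
        · intro i _
          apply Finset.sum_nonneg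
          intro b _
          exact le_of_lt (Real.exp_pos _)
        · intro i _
          exact hbound i
    _ = (2 ^ n : ℝ) * Real.exp (h ^ 2 * n / 2) := by
        rw [Finset.prod_const, Finset.card_univ, Fintype.card_fin, mul_pow,
          ← Real.exp_nat_mul]
        ring_nf

/-- Hoeffding-type counting bound on the cube -/
lemma count_ge (n : ℕ) (hn : 0 < n) (a : Fin n → ℝ) (ha : ∀ i, |a i| ≤ 1)
    (t : ℝ) (ht : 0 ≤ t) :
    ((univ.filter fun x : Fin n → Bool => t ≤ ∑ i, a i * sgn (x i)).card : ℝ)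
      ≤ (2 ^ n : ℝ) * Real.exp (-t ^ 2 / (2 * n)) := by
  set h : ℝ := t / n with hh
  have hn' : (0:ℝ) < n := by exact_mod_cast hn
  have key : ((univ.filter fun x : Fin n → Bool => t ≤ ∑ i, a i * sgn (x i)).card : ℝ)
      * Real.exp (h * t)
      ≤ (2 ^ n : ℝ) * Real.exp (h ^ 2 * n / 2) := by
    calc ((univ.filter fun x : Fin n → Bool => t ≤ ∑ i, a i * sgn (x i)).card : ℝ)
        * Real.exp (h * t)
        = ∑ _x ∈ univ.filter fun x : Fin n → Bool => t ≤ ∑ i, a i * sgn (x i),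
            Real.exp (h * t) := by rw [Finset.sum_const, nsmul_eq_mul]
      _ ≤ ∑ x ∈ univ.filter fun x : Fin n → Bool => t ≤ ∑ i, a i * sgn (x i),
            Real.exp (h * ∑ i, a i * sgn (x i)) := by
          apply Finset.sum_le_sum
          intro x hx
          apply Real.exp_le_exp.2
          have := (Finset.mem_filter.1 hx).2
          apply mul_le_mul_of_nonneg_left this
          positivity
      _ ≤ ∑ x : Fin n → Bool, Real.exp (h * ∑ i, a i * sgn (x i)) := by
          apply Finset.sum_le_sum_of_subset_of_nonneg (Finset.filter_subset _ _)
          intro x _ _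
          exact le_of_lt (Real.exp_pos _)
      _ ≤ (2 ^ n : ℝ) * Real.exp (h ^ 2 * n / 2) := sum_exp_le n a ha h
  have hexp : Real.exp (h ^ 2 * n / 2) = Real.exp (-t ^ 2 / (2 * n)) * Real.exp (h * t) := by
    rw [← Real.exp_add]
    congr 1
    rw [hh]
    field_simp
    ring
  rw [hexp, ← mul_assoc] at key
  have hepos : (0:ℝ) < Real.exp (h * t) := Real.exp_pos _
  exact le_of_mul_le_mul_right key hepos


/-- monotonicity of x ↦ -x log x on [0, 1/e] -/
lemma negMulLog_mono {p q : ℝ} (hp : 0 ≤ p) (hpq : p ≤ q) (hq : q ≤ Real.exp (-1)) :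
    Real.negMulLog p ≤ Real.negMulLog q := by
  have hq1 : q ≤ 1 := le_trans hq (by
    rw [Real.exp_le_one_iff]; norm_num)
  rcases eq_or_lt_of_le hp with h0 | h0
  · rw [← h0, Real.negMulLog_zero]
    exact Real.negMulLog_nonneg (le_trans hp hpq) hq1
  · have hq0 : 0 < q := lt_of_lt_of_le h0 hpq
    have hlogq : Real.log q ≤ -1 := by
      calc Real.log q ≤ Real.log (Real.exp (-1)) := Real.log_le_log hq0 hq
        _ = -1 := Real.log_exp _
    have hsplit : Real.log p = Real.log (p / q) + Real.log q := by
      rw [Real.log_div (ne_of_gt h0) (ne_of_gt hq0)]; ring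
    have hle : Real.log (p / q) ≤ p / q - 1 :=
      Real.log_le_sub_one_of_pos (div_pos h0 hq0)
    have h1 : -(p * Real.log p) = -(p * Real.log (p/q)) - p * Real.log q := by
      rw [hsplit]; ring
    have hlog_qp : Real.log (q/p) = -Real.log (p/q) := by
      rw [← Real.log_inv, inv_div]
    have h2' : p * Real.log (q/p) = -(p * Real.log (p/q)) := by
      rw [hlog_qp]; ring
    have h3 : Real.log (q / p) ≤ q / p - 1 :=
      Real.log_le_sub_one_of_pos (div_pos hq0 h0)
    have h4 : p * Real.log (q/p) ≤ q - p := by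
      have := mul_le_mul_of_nonneg_left h3 (le_of_lt h0)
      calc p * Real.log (q/p) ≤ p * (q/p - 1) := this
        _ = q - p := by field_simp
    have key : 0 ≤ (q - p) * (-(Real.log q) - 1) :=
      mul_nonneg (by linarith) (by linarith)
    rw [Real.negMulLog, Real.negMulLog, neg_mul, neg_mul]
    nlinarith [h1, h2', h4, key]

lemma negMulLog_le_one_sub {p : ℝ} (hp : 0 < p) : Real.negMulLog p ≤ 1 - p := by
  have h := Real.log_le_sub_one_of_pos (show (0:ℝ) < 1/p by positivity)
  rw [Real.log_div one_ne_zero (ne_of_gt hp), Real.log_one] at h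
  rw [Real.negMulLog, neg_mul]
  have := mul_le_mul_of_nonneg_left h (le_of_lt hp)
  calc -(p * Real.log p) = p * (0 - Real.log p) := by ring
    _ ≤ p * (1/p - 1) := by
        apply mul_le_mul_of_nonneg_left _ (le_of_lt hp)
        linarith
    _ = 1 - p := by field_simp

lemma self_le_exp_half {c : ℝ} (hc : 0 ≤ c) : c ≤ Real.exp (c / 2) := by
  have h1 : 1 + c/4 ≤ Real.exp (c/4) := by linarith [Real.add_one_le_exp (c/4)]
  have h2 : Real.exp (c/2) = Real.exp (c/4) * Real.exp (c/4) := by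
    rw [← Real.exp_add]; ring_nf
  have h3 : (1 + c/4) * (1 + c/4) ≤ Real.exp (c/4) * Real.exp (c/4) :=
    mul_le_mul h1 h1 (by linarith) (le_of_lt (Real.exp_pos _))
  rw [h2]
  nlinarith [sq_nonneg (1 - c/4)]

lemma mul_exp_neg_le {c : ℝ} (hc : 0 ≤ c) : c * Real.exp (-c) ≤ Real.exp (-(c/2)) := by
  have h := self_le_exp_half hc
  have h2 : Real.exp (-c) = Real.exp (-(c/2)) * Real.exp (-(c/2)) := by
    rw [← Real.exp_add]; ring_nf
  have h3 : Real.exp (c/2) * Real.exp (-(c/2)) = 1 := by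
    rw [← Real.exp_add]; simp
  nlinarith [Real.exp_pos (-(c/2)), Real.exp_pos (c/2)]

lemma geom_sum_le_two {r : ℝ} (hr0 : 0 ≤ r) (hr : r ≤ 1/2) (m : ℕ) :
    ∑ k ∈ Finset.range m, r ^ k ≤ 2 := by
  have h := geom_sum_mul r m
  have hnn : (0:ℝ) ≤ ∑ k ∈ Finset.range m, r ^ k :=
    Finset.sum_nonneg fun k _ => pow_nonneg hr0 k
  nlinarith [pow_nonneg hr0 m]

/-- sum of a geometric-type series over a set of nonzero integers -/
lemma sum_pow_abs_le (S : Finset ℤ) (K : ℕ)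
    (hS : ∀ v ∈ S, v ≠ 0 ∧ (|v| - 1).toNat < K)
    (r : ℝ) (hr0 : 0 ≤ r) (hr : r ≤ 1/2) :
    ∑ v ∈ S, r ^ ((|v| - 1).toNat) ≤ 4 := by
  have split := Finset.sum_filter_add_sum_filter_not S (fun v => 0 < v)
    (fun v => r ^ ((|v| - 1).toNat))
  have hpos : ∑ v ∈ S.filter (fun v => 0 < v), r ^ ((|v| - 1).toNat) ≤ 2 := by
    have hinj : ∀ x ∈ S.filter (fun v => 0 < v), ∀ y ∈ S.filter (fun v => 0 < v),
        (|x| - 1).toNat = (|y| - 1).toNat → x = y := by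
      intro x hx y hy hxy
      have hx' := (Finset.mem_filter.1 hx).2
      have hy' := (Finset.mem_filter.1 hy).2
      have h1 : |x| = x := abs_of_pos hx'
      have h2 : |y| = y := abs_of_pos hy'
      omega
    have heq := Finset.sum_image (s := S.filter (fun v => 0 < v))
      (g := fun v => (|v| - 1).toNat) (f := fun k => r ^ k) hinj
    rw [← heq]
    calc _ ≤ ∑ k ∈ Finset.range K, r ^ k := by
          apply Finset.sum_le_sum_of_subset_of_nonneg
          · intro k hk
            rcases Finset.mem_image.1 hk with ⟨v, hv, rfl⟩
            exact Finset.mem_range.2 (hS v (Finset.mem_filter.1 hv).1).2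
          · intro k _ _
            exact pow_nonneg hr0 k
      _ ≤ 2 := geom_sum_le_two hr0 hr K
  have hneg : ∑ v ∈ S.filter (fun v => ¬ 0 < v), r ^ ((|v| - 1).toNat) ≤ 2 := by
    have hinj : ∀ x ∈ S.filter (fun v => ¬ 0 < v), ∀ y ∈ S.filter (fun v => ¬ 0 < v),
        (|x| - 1).toNat = (|y| - 1).toNat → x = y := by
      intro x hx y hy hxy
      have hx0 := (hS x (Finset.mem_filter.1 hx).1).1
      have hy0 := (hS y (Finset.mem_filter.1 hy).1).1
      have hx' := (Finset.mem_filter.1 hx).2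
      have hy' := (Finset.mem_filter.1 hy).2
      have h1 : |x| = -x := abs_of_neg (by omega)
      have h2 : |y| = -y := abs_of_neg (by omega)
      omega
    have heq := Finset.sum_image (s := S.filter (fun v => ¬ 0 < v))
      (g := fun v => (|v| - 1).toNat) (f := fun k => r ^ k) hinj
    rw [← heq]
    calc _ ≤ ∑ k ∈ Finset.range K, r ^ k := by
          apply Finset.sum_le_sum_of_subset_of_nonneg
          · intro k hk
            rcases Finset.mem_image.1 hk with ⟨v, hv, rfl⟩
            exact Finset.mem_range.2 (hS v (Finset.mem_filter.1 hv).1).2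
          · intro k _ _
            exact pow_nonneg hr0 k
      _ ≤ 2 := geom_sum_le_two hr0 hr K
  linarith

/-- integer bucket of the signed sum -/
noncomputable def bucket (n : ℕ) (a : Fin n → ℝ) (s : ℝ) (x : Fin n → Bool) : ℤ :=
  ⌊(∑ i, a i * sgn (x i)) / s + 1/2⌋

lemma ip_abs_le (n : ℕ) (a : Fin n → ℝ) (ha : ∀ i, |a i| ≤ 1) (x : Fin n → Bool) :
    |∑ i, a i * sgn (x i)| ≤ n := by
  calc |∑ i, a i * sgn (x i)| ≤ ∑ i, |a i * sgn (x i)| :=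
        Finset.abs_sum_le_sum_abs _ _
    _ ≤ ∑ _i : Fin n, (1:ℝ) := by
        apply Finset.sum_le_sum
        intro i _
        rw [abs_mul, abs_sgn, mul_one]
        exact ha i
    _ = n := by simp

lemma card_cube (n : ℕ) : (Fintype.card (Fin n → Bool) : ℝ) = 2 ^ n := by
  simp [Fintype.card_fun]

/-- tail bound for the bucket distribution -/
lemma bucket_tail (n : ℕ) (hn : 0 < n) (a : Fin n → ℝ) (ha : ∀ i, |a i| ≤ 1)
    (s : ℝ) (hs11 : 11 ≤ s) (v : ℤ) (hv : v ≠ 0) :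
    pr (bucket n a s) v ≤ Real.exp (-(((|v| : ℝ) - 1/2) ^ 2 * s ^ 2 / (2 * n))) := by
  have hs0 : (0:ℝ) < s := by linarith
  have hn' : (0:ℝ) < n := by exact_mod_cast hn
  have habs1 : (1:ℝ) ≤ (|v| : ℝ) := by
    have : 1 ≤ |v| := Int.one_le_abs hv
    exact_mod_cast this
  set t : ℝ := ((|v| : ℝ) - 1/2) * s with htdef
  have ht0 : 0 ≤ t := by
    apply mul_nonneg _ (le_of_lt hs0)
    linarith
  have htsq : -t ^ 2 / (2 * n) = -(((|v| : ℝ) - 1/2) ^ 2 * s ^ 2 / (2 * n)) := by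
    rw [htdef]; ring
  have hfin : ∀ (b : Fin n → ℝ), (∀ i, |b i| ≤ 1) →
      fib (bucket n a s) v ⊆
        univ.filter (fun x : Fin n → Bool => t ≤ ∑ i, b i * sgn (x i)) →
      pr (bucket n a s) v ≤ Real.exp (-(((|v| : ℝ) - 1/2) ^ 2 * s ^ 2 / (2 * n))) := by
    intro b hb hsub
    have hcount := count_ge n hn b hb t ht0
    have hcard := Finset.card_le_card hsub
    unfold pr
    rw [card_cube, ← htsq]
    rw [div_le_iff₀ (by positivity)]
    calc ((fib (bucket n a s) v).card : ℝ)
        ≤ ((univ.filter (fun x : Fin n → Bool => t ≤ ∑ i, b i * sgn (x i))).card : ℝ) := by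
          exact_mod_cast hcard
      _ ≤ (2 ^ n : ℝ) * Real.exp (-t ^ 2 / (2 * n)) := hcount
      _ = Real.exp (-t ^ 2 / (2 * n)) * 2 ^ n := by ring
  rcases lt_or_gt_of_ne hv with hneg | hpos
  · -- v negative : use -a
    apply hfin (fun i => -a i) (fun i => by rw [abs_neg]; exact ha i)
    intro x hx
    have hY : bucket n a s x = v := (Finset.mem_filter.1 hx).2
    have hfl : (∑ i, a i * sgn (x i)) / s + 1/2 < (v : ℝ) + 1 := by
      have h := Int.lt_floor_add_one ((∑ i, a i * sgn (x i)) / s + 1/2)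
      rwa [show ⌊(∑ i, a i * sgn (x i)) / s + 1/2⌋ = bucket n a s x from rfl, hY] at h
    have habsv : (|v| : ℝ) = -(v : ℝ) := by
      have : |v| = -v := abs_of_neg hneg
      exact_mod_cast this
    have h1 : (∑ i, a i * sgn (x i)) / s < (v : ℝ) + 1/2 := by
      push_cast at hfl ⊢
      linarith
    have h2 : (∑ i, a i * sgn (x i)) < ((v : ℝ) + 1/2) * s :=
      (div_lt_iff₀ hs0).1 h1
    have h3 : ∑ i, (fun i => -a i) i * sgn (x i) = -∑ i, a i * sgn (x i) := by
      rw [← Finset.sum_neg_distrib]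
      apply Finset.sum_congr rfl
      intro i _
      ring
    rw [Finset.mem_filter]
    refine ⟨Finset.mem_univ _, ?_⟩
    rw [h3, htdef, habsv]
    nlinarith
  · -- v positive : use a
    apply hfin a ha
    intro x hx
    have hY : bucket n a s x = v := (Finset.mem_filter.1 hx).2
    have hfl : (v : ℝ) ≤ (∑ i, a i * sgn (x i)) / s + 1/2 := by
      have h := Int.floor_le ((∑ i, a i * sgn (x i)) / s + 1/2)
      rwa [show ⌊(∑ i, a i * sgn (x i)) / s + 1/2⌋ = bucket n a s x from rfl, hY] at h
    have habsv : (|v| : ℝ) = (v : ℝ) := by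
      have : |v| = v := abs_of_pos hpos
      exact_mod_cast this
    have h1 : (v : ℝ) - 1/2 ≤ (∑ i, a i * sgn (x i)) / s := by
      push_cast at hfl ⊢
      linarith
    have h2 : ((v : ℝ) - 1/2) * s ≤ ∑ i, a i * sgn (x i) :=
      (le_div_iff₀ hs0).1 h1
    rw [Finset.mem_filter]
    refine ⟨Finset.mem_univ _, ?_⟩
    rw [htdef, habsv]
    linarith

/-- bound on the bucket values -/
lemma bucket_range (n : ℕ) (a : Fin n → ℝ) (ha : ∀ i, |a i| ≤ 1)
    (s : ℝ) (hs11 : 11 ≤ s) (x : Fin n → Bool) :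
    (|bucket n a s x| - 1).toNat < n + 2 := by
  have hs0 : (0:ℝ) < s := by linarith
  have hip := ip_abs_le n a ha x
  have habs : |(∑ i, a i * sgn (x i)) / s| ≤ n := by
    rw [abs_div, abs_of_pos hs0]
    rw [div_le_iff₀ hs0]
    calc |∑ i, a i * sgn (x i)| ≤ n := hip
      _ ≤ (n : ℝ) * s := by nlinarith [Nat.cast_nonneg (α := ℝ) n]
  have habs' := abs_le.1 habs
  set u : ℝ := (∑ i, a i * sgn (x i)) / s + 1/2 with hu
  have h1 : (bucket n a s x : ℝ) ≤ u := Int.floor_le u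
  have h2 : u < (bucket n a s x : ℝ) + 1 := Int.lt_floor_add_one u
  have hub : (bucket n a s x : ℝ) ≤ (n : ℝ) + 1/2 := by rw [hu] at h1; linarith
  have hlb : -((n : ℝ) + 3/2) ≤ (bucket n a s x : ℝ) := by rw [hu] at h2; linarith
  have : |bucket n a s x| ≤ (n : ℤ) + 1 := by
    rw [abs_le]
    constructor
    · have h5 : ((-(n+1+1) : ℤ) : ℝ) < (bucket n a s x : ℝ) := by push_cast; linarith
      have := Int.cast_lt.1 h5
      omega
    · have h5 : ((bucket n a s x : ℤ) : ℝ) < (((n:ℤ)+1+1 : ℤ) : ℝ) := by push_cast; linarith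
      have := Int.cast_lt.1 h5
      omega
  omega

/-- exponential weight used to dominate bucket entropy terms -/
noncomputable def Efun (L : ℝ) (v : ℤ) : ℝ := Real.exp (-((2*(|v| : ℝ) - 1) * (L/16)))

/-- entropy bound for one bucket coordinate -/
lemma ent_bucket (n : ℕ) (hn : 0 < n) (a : Fin n → ℝ) (ha : ∀ i, |a i| ≤ 1)
    (L : ℝ) (hL : 121 ≤ L) :
    ent (bucket n a (Real.sqrt (L * n))) ≤ 8 * Real.exp (-(L/16)) := by
  have hn' : (1:ℝ) ≤ n := by exact_mod_cast hn
  have hL0 : (0:ℝ) < L := by linarith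
  set s : ℝ := Real.sqrt (L * n) with hsdef
  have hs2 : s ^ 2 = L * n := Real.sq_sqrt (by positivity)
  have hs11 : (11:ℝ) ≤ s := by
    have h121 : (11:ℝ) = Real.sqrt 121 := by
      rw [show (121:ℝ) = 11^2 by norm_num, Real.sqrt_sq (by norm_num)]
    rw [h121, hsdef]
    apply Real.sqrt_le_sqrt
    nlinarith
  set Y := bucket n a s with hYdef
  -- tail bound in terms of L
  have htail : ∀ v : ℤ, v ≠ 0 →
      pr Y v ≤ Real.exp (-(((|v| : ℝ) - 1/2) ^ 2 * L / 2)) := by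
    intro v hv
    have h := bucket_tail n hn a ha s hs11 v hv
    have heq : ((|v| : ℝ) - 1/2) ^ 2 * s ^ 2 / (2 * n) = ((|v| : ℝ) - 1/2) ^ 2 * L / 2 := by
      rw [hs2]
      field_simp
    rwa [heq] at h
  -- per-value bounds
  have hterm : ∀ v : ℤ, v ≠ 0 →
      Real.negMulLog (pr Y v) ≤ Efun L v ∧ pr Y v ≤ Efun L v := by
    intro v hv
    have habs1 : (1:ℝ) ≤ (|v| : ℝ) := by exact_mod_cast Int.one_le_abs hv
    set k : ℝ := (|v| : ℝ) with hk
    set c : ℝ := (k - 1/2) ^ 2 * L / 2 with hc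
    have hc1 : 1 ≤ c := by nlinarith
    have hc0 : 0 ≤ c := by linarith
    have hpr : pr Y v ≤ Real.exp (-c) := htail v hv
    have hhalf : Real.exp (-(c/2)) ≤ Efun L v := by
      unfold Efun
      apply Real.exp_le_exp.2
      simp only [neg_le_neg_iff]
      rw [hc]
      nlinarith
    have hexpc : Real.exp (-c) ≤ Real.exp (-(c/2)) :=
      Real.exp_le_exp.2 (by linarith)
    constructor
    · calc Real.negMulLog (pr Y v) ≤ Real.negMulLog (Real.exp (-c)) := by
            apply negMulLog_mono (pr_nonneg _ _) hpr
            apply Real.exp_le_exp.2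
            linarith
        _ = c * Real.exp (-c) := by
            rw [Real.negMulLog, Real.log_exp]; ring
        _ ≤ Real.exp (-(c/2)) := mul_exp_neg_le hc0
        _ ≤ Efun L v := hhalf
    · exact le_trans hpr (le_trans hexpc hhalf)
  -- geometric sum bound
  have hsum : ∑ v ∈ (univ.image Y).erase 0, Efun L v ≤ 4 * Real.exp (-(L/16)) := by
    have hr0 : (0:ℝ) ≤ Real.exp (-(L/8)) := le_of_lt (Real.exp_pos _)
    have hr : Real.exp (-(L/8)) ≤ 1/2 := by
      calc Real.exp (-(L/8)) ≤ Real.exp (-1) := Real.exp_le_exp.2 (by linarith)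
        _ ≤ 1/2 := by
          rw [Real.exp_neg]
          rw [inv_le_comm₀ (Real.exp_pos 1) (by norm_num)]
          calc (1/2 : ℝ)⁻¹ = 2 := by norm_num
            _ ≤ Real.exp 1 := by linarith [Real.add_one_le_exp 1]
    have hEeq : ∀ v ∈ (univ.image Y).erase 0,
        Efun L v = Real.exp (-(L/16)) * (Real.exp (-(L/8))) ^ ((|v| - 1).toNat) := by
      intro v hv
      have hv0 : v ≠ 0 := Finset.ne_of_mem_erase hv
      have habs1 : 1 ≤ |v| := Int.one_le_abs hv0
      have hcast : (((|v| - 1).toNat : ℤ) : ℝ) = (|v| : ℝ) - 1 := by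
        have : ((|v| - 1).toNat : ℤ) = |v| - 1 := Int.toNat_of_nonneg (by omega)
        push_cast [this]
        ring
      unfold Efun
      rw [← Real.exp_nat_mul, ← Real.exp_add]
      congr 1
      have : ((((|v| - 1).toNat : ℕ) : ℝ)) = (|v| : ℝ) - 1 := by exact_mod_cast hcast
      rw [this]
      ring
    rw [Finset.sum_congr rfl hEeq, ← Finset.mul_sum]
    have hgeom : ∑ v ∈ (univ.image Y).erase 0, (Real.exp (-(L/8))) ^ ((|v| - 1).toNat) ≤ 4 := by
      apply sum_pow_abs_le _ (n + 2) _ _ hr0 hr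
      intro v hv
      refine ⟨Finset.ne_of_mem_erase hv, ?_⟩
      have hv' := Finset.mem_of_mem_erase hv
      rcases Finset.mem_image.1 hv' with ⟨x, -, rfl⟩
      exact bucket_range n a ha s hs11 x
    calc Real.exp (-(L/16)) * ∑ v ∈ (univ.image Y).erase 0, (Real.exp (-(L/8))) ^ ((|v| - 1).toNat)
        ≤ Real.exp (-(L/16)) * 4 := by
          apply mul_le_mul_of_nonneg_left hgeom (le_of_lt (Real.exp_pos _))
      _ = 4 * Real.exp (-(L/16)) := by ring
  -- assemble
  have hsum2 : ∑ v ∈ (univ.image Y).erase 0, Real.negMulLog (pr Y v)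
      ≤ 4 * Real.exp (-(L/16)) := by
    calc ∑ v ∈ (univ.image Y).erase 0, Real.negMulLog (pr Y v)
        ≤ ∑ v ∈ (univ.image Y).erase 0, Efun L v := by
          apply Finset.sum_le_sum
          intro v hv
          exact (hterm v (Finset.ne_of_mem_erase hv)).1
      _ ≤ 4 * Real.exp (-(L/16)) := hsum
  by_cases h0 : (0:ℤ) ∈ univ.image Y
  · have hsplit : ent Y = Real.negMulLog (pr Y 0)
        + ∑ v ∈ (univ.image Y).erase 0, Real.negMulLog (pr Y v) := by
      unfold ent
      rw [← Finset.add_sum_erase _ _ h0]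
    have hpr0 : 0 < pr Y 0 := pr_pos h0
    have hterm0 : Real.negMulLog (pr Y 0) ≤ 4 * Real.exp (-(L/16)) := by
      have h1 : Real.negMulLog (pr Y 0) ≤ 1 - pr Y 0 := negMulLog_le_one_sub hpr0
      have h2 : 1 - pr Y 0 = ∑ v ∈ (univ.image Y).erase 0, pr Y v := by
        have := sum_pr Y
        rw [← Finset.add_sum_erase _ _ h0] at this
        linarith
      have h3 : ∑ v ∈ (univ.image Y).erase 0, pr Y v
          ≤ ∑ v ∈ (univ.image Y).erase 0, Efun L v := by
        apply Finset.sum_le_sum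
        intro v hv
        exact (hterm v (Finset.ne_of_mem_erase hv)).2
      linarith
    rw [hsplit]
    linarith
  · have : ent Y = ∑ v ∈ (univ.image Y).erase 0, Real.negMulLog (pr Y v) := by
      unfold ent
      rw [Finset.erase_eq_self.2 h0]
    rw [this]
    have hepos : 0 ≤ Real.exp (-(L/16)) := le_of_lt (Real.exp_pos _)
    linarith

/-- Hamming balls are small -/
lemma ball_card_le_sum (n r : ℕ) (x0 : Fin n → Bool) : (univ.filter fun x : Fin n → Bool =>
      (univ.filter fun i => x i ≠ x0 i).card ≤ r).card
      ≤ ∑ k ∈ Finset.range (r+1), n.choose k := by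
    have hinj : ∀ x ∈ (univ.filter fun x : Fin n → Bool =>
        (univ.filter fun i => x i ≠ x0 i).card ≤ r),
        ∀ y ∈ (univ.filter fun x : Fin n → Bool =>
        (univ.filter fun i => x i ≠ x0 i).card ≤ r),
        (univ.filter fun i => x i ≠ x0 i) = (univ.filter fun i => y i ≠ x0 i) → x = y := by
      intro x _ y _ hxy
      funext i
      have : (i ∈ univ.filter fun i => x i ≠ x0 i) ↔ (i ∈ univ.filter fun i => y i ≠ x0 i) := by
        rw [hxy]
      simp only [Finset.mem_filter, Finset.mem_univ, true_and] at this
      cases hx : x i <;> cases hy : y i <;> cases h0 : x0 i <;> simp_all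
    calc (univ.filter fun x : Fin n → Bool =>
        (univ.filter fun i => x i ≠ x0 i).card ≤ r).card
        ≤ ((Finset.range (r+1)).biUnion fun k => Finset.powersetCard k (univ : Finset (Fin n))).card := by
          apply Finset.card_le_card_of_injOn
            (fun x => univ.filter fun i => x i ≠ x0 i)
          · intro x hx
            rw [Finset.mem_coe, Finset.mem_biUnion]
            refine ⟨(univ.filter fun i => x i ≠ x0 i).card, ?_, ?_⟩
            · rw [Finset.mem_range]
              have := (Finset.mem_filter.1 hx).2
              omega
            · rw [Finset.mem_powersetCard]
              exact ⟨Finset.filter_subset _ _, rfl⟩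
          · intro x hx y hy hxy
            exact hinj x hx y hy hxy
      _ ≤ ∑ k ∈ Finset.range (r+1), (Finset.powersetCard k (univ : Finset (Fin n))).card :=
          Finset.card_biUnion_le
      _ = ∑ k ∈ Finset.range (r+1), n.choose k := by
          apply Finset.sum_congr rfl
          intro k _
          rw [Finset.card_powersetCard, Finset.card_univ, Fintype.card_fin]
lemma sum_choose_le (n r : ℕ) : ((∑ k ∈ Finset.range (r+1), n.choose k : ℕ) : ℝ) ≤ 15 ^ r * (16/15) ^ n := by
    have key : (∑ k ∈ Finset.range (r+1), (n.choose k : ℝ)) * (1/15) ^ r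
        ≤ (16/15) ^ n := by
      calc (∑ k ∈ Finset.range (r+1), (n.choose k : ℝ)) * (1/15) ^ r
          = ∑ k ∈ Finset.range (r+1), (n.choose k : ℝ) * (1/15) ^ r := Finset.sum_mul ..
        _ ≤ ∑ k ∈ Finset.range (r+1), (n.choose k : ℝ) * (1/15) ^ k := by
            apply Finset.sum_le_sum
            intro k hk
            have hk' : k ≤ r := by
              have := Finset.mem_range.1 hk
              omega
            have hp : ((1:ℝ)/15) ^ r ≤ (1/15) ^ k :=
              pow_le_pow_of_le_one (by norm_num) (by norm_num) hk'
            exact mul_le_mul_of_nonneg_left hp (by positivity)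
        _ ≤ ∑ k ∈ Finset.range (r+n+1), (n.choose k : ℝ) * (1/15) ^ k := by
            apply Finset.sum_le_sum_of_subset_of_nonneg
              (Finset.range_subset_range.2 (by omega))
            intro k _ _
            positivity
        _ = ∑ k ∈ Finset.range (n+1), (n.choose k : ℝ) * (1/15) ^ k := by
            symm
            apply Finset.sum_subset (Finset.range_subset_range.2 (by omega))
            intro k _ hk
            rw [Finset.mem_range] at hk
            have : n < k := by omega
            rw [Nat.choose_eq_zero_of_lt this]
            simp
        _ = (16/15) ^ n := by
            have := add_pow (1/15 : ℝ) 1 n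
            simp only [one_pow, mul_one] at this
            rw [show (16/15 : ℝ) = 1/15 + 1 by norm_num, this]
            apply Finset.sum_congr rfl
            intro k _
            ring
    have h15 : ((1:ℝ)/15) ^ r * 15 ^ r = 1 := by
      rw [← mul_pow]
      norm_num
    push_cast
    calc (∑ k ∈ Finset.range (r+1), (n.choose k : ℝ))
        = (∑ k ∈ Finset.range (r+1), (n.choose k : ℝ)) * ((1/15) ^ r * 15 ^ r) := by
          rw [h15, mul_one]
      _ = ((∑ k ∈ Finset.range (r+1), (n.choose k : ℝ)) * (1/15) ^ r) * 15 ^ r := by ring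
      _ ≤ (16/15) ^ n * 15 ^ r := by
          apply mul_le_mul_of_nonneg_right key (by positivity)
      _ = 15 ^ r * (16/15) ^ n := by ring
lemma ball_card_le (n r : ℕ) (x0 : Fin n → Bool) :
    ((univ.filter fun x : Fin n → Bool =>
        (univ.filter fun i => x i ≠ x0 i).card ≤ r).card : ℝ)
      ≤ 15 ^ r * (16/15) ^ n := by
  calc ((univ.filter fun x : Fin n → Bool =>
      (univ.filter fun i => x i ≠ x0 i).card ≤ r).card : ℝ)
      ≤ ((∑ k ∈ Finset.range (r+1), n.choose k : ℕ) : ℝ) := by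
        exact_mod_cast ball_card_le_sum n r x0
    _ ≤ 15 ^ r * (16/15) ^ n := sum_choose_le n r

/-- in a large set, two points are far apart in Hamming distance -/
lemma exists_far_pair (n : ℕ) (hn : 0 < n) (B : Finset (Fin n → Bool))
    (hB : Real.exp ((Real.log 2 - 3/10) * n) ≤ (B.card : ℝ)) :
    ∃ x ∈ B, ∃ y ∈ B, (n : ℝ)/10 < ((univ.filter fun i => x i ≠ y i).card : ℝ) := by
  have hn' : (1:ℝ) ≤ n := by exact_mod_cast hn
  have hBne : B.Nonempty := by
    rw [← Finset.card_pos]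
    by_contra h
    push_neg at h
    interval_cases h' : B.card
    · simp only [Nat.cast_zero] at hB
      linarith [Real.exp_pos ((Real.log 2 - 3/10) * n)]
  obtain ⟨x0, hx0⟩ := hBne
  by_contra hcon
  push_neg at hcon
  -- then B is inside a small Hamming ball around x0
  have hsub : B ⊆ univ.filter fun x : Fin n → Bool =>
      (univ.filter fun i => x i ≠ x0 i).card ≤ n/10 := by
    intro y hy
    rw [Finset.mem_filter]
    refine ⟨Finset.mem_univ _, ?_⟩
    have h1 := hcon x0 hx0 y hy
    have h2 : ((univ.filter fun i => x0 i ≠ y i).card : ℝ) * 10 ≤ n := by linarith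
    have h2' : (univ.filter fun i => x0 i ≠ y i).card * 10 ≤ n := by exact_mod_cast h2
    have heq : (univ.filter fun i => y i ≠ x0 i) = (univ.filter fun i => x0 i ≠ y i) := by
      apply Finset.filter_congr
      intro i _
      constructor
      · intro h; exact fun he => h he.symm
      · intro h; exact fun he => h he.symm
    rw [heq]
    omega
  have hball := ball_card_le n (n/10) x0
  have hcard : (B.card : ℝ) ≤ 15 ^ (n/10) * (16/15) ^ n := by
    calc (B.card : ℝ) ≤ _ := by exact_mod_cast Finset.card_le_card hsub
      _ ≤ 15 ^ (n/10) * (16/15) ^ n := hball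
  -- numeric contradiction
  have hlog2u : Real.log 2 < 0.6931471808 := Real.log_two_lt_d9
  have hlog2l : 0.6931471803 < Real.log 2 := Real.log_two_gt_d9
  have hlog15 : Real.log 15 ≤ 4 * Real.log 2 := by
    calc Real.log 15 ≤ Real.log 16 := Real.log_le_log (by norm_num) (by norm_num)
      _ = 4 * Real.log 2 := by
        rw [show (16:ℝ) = 2^4 by norm_num, Real.log_pow]
        push_cast
        ring
  have hlog1615 : Real.log (16/15) ≤ 1/15 := by
    calc Real.log (16/15) ≤ 16/15 - 1 := Real.log_le_sub_one_of_pos (by norm_num)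
      _ = 1/15 := by norm_num
  have hr : ((n/10 : ℕ) : ℝ) ≤ (n : ℝ)/10 := by
    have : (n/10 : ℕ) * 10 ≤ n := by omega
    have := (Nat.cast_le (α := ℝ)).2 this
    push_cast at this
    linarith
  have hballlog : (15:ℝ) ^ (n/10 : ℕ) * (16/15) ^ n
      = Real.exp (((n/10 : ℕ) : ℝ) * Real.log 15 + (n : ℝ) * Real.log (16/15)) := by
    rw [Real.exp_add, Real.exp_nat_mul, Real.exp_nat_mul,
      Real.exp_log (by norm_num : (0:ℝ) < 15), Real.exp_log (by norm_num : (0:ℝ) < 16/15)]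
  have hn0 : (0:ℝ) ≤ (n:ℝ) := by positivity
  have hr0 : (0:ℝ) ≤ ((n/10 : ℕ) : ℝ) := by positivity
  have hlog15nn : 0 ≤ Real.log 15 := Real.log_nonneg (by norm_num)
  have h15n : ((n/10 : ℕ) : ℝ) * Real.log 15 ≤ (n:ℝ)/10 * (4 * Real.log 2) :=
    mul_le_mul hr hlog15 hlog15nn (by positivity)
  have hbn : (n:ℝ) * Real.log (16/15) ≤ (n:ℝ) * (1/15) :=
    mul_le_mul_of_nonneg_left hlog1615 hn0
  have hX : (n:ℝ) * 0.6931471803 ≤ (n:ℝ) * Real.log 2 :=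
    mul_le_mul_of_nonneg_left (le_of_lt hlog2l) hn0
  have hlt : ((n/10 : ℕ) : ℝ) * Real.log 15 + (n : ℝ) * Real.log (16/15)
      < (Real.log 2 - 3/10) * (n : ℝ) := by
    nlinarith [hn']
  have hfinal : (15:ℝ) ^ (n/10 : ℕ) * (16/15) ^ n
      < Real.exp ((Real.log 2 - 3/10) * n) := by
    rw [hballlog]
    exact Real.exp_lt_exp.2 hlt
  linarith

/-- **Partial coloring lemma**: a {-1,0,1} coloring with many nonzeros and
all row sums at most `√(121 max(1, log(2d/n)) n)`. -/
lemma partial_coloring (n d : ℕ) (hn : 0 < n) (hd : 0 < d)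
    (a : Fin d → Fin n → ℝ) (ha : ∀ j i, |a j i| ≤ 1) :
    ∃ z : Fin n → ℝ, (∀ i, z i = 0 ∨ z i = 1 ∨ z i = -1) ∧
      (n : ℝ)/10 < ((univ.filter fun i => z i ≠ 0).card : ℝ) ∧
      ∀ j, |∑ i, z i * a j i| ≤ Real.sqrt (121 * max 1 (Real.log (2*d/n)) * n) := by
  have hn' : (1:ℝ) ≤ n := by exact_mod_cast hn
  have hd' : (1:ℝ) ≤ d := by exact_mod_cast hd
  set M : ℝ := Real.log (2*d/n) with hM
  set L : ℝ := 121 * max 1 M with hL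
  have hmax1 : (1:ℝ) ≤ max 1 M := le_max_left _ _
  have hL121 : (121:ℝ) ≤ L := by
    rw [hL]; nlinarith
  have hL0 : (0:ℝ) < L := by linarith
  set s : ℝ := Real.sqrt (L * n) with hsdef
  have hs2 : s ^ 2 = L * n := Real.sq_sqrt (by positivity)
  have hs0 : (0:ℝ) < s := Real.sqrt_pos.2 (by positivity)
  set Y : Fin d → (Fin n → Bool) → ℤ := fun j => bucket n (a j) s with hY
  -- entropy bound
  have hentsum : ∑ j : Fin d, ent (Y j) ≤ (3/10) * n := by
    have h1 : ∀ j : Fin d, ent (Y j) ≤ 8 * Real.exp (-(L/16)) := fun j =>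
      ent_bucket n hn (a j) (ha j) L hL121
    have h2 : ∑ j : Fin d, ent (Y j) ≤ (d : ℝ) * (8 * Real.exp (-(L/16))) := by
      calc ∑ j : Fin d, ent (Y j) ≤ ∑ _j : Fin d, 8 * Real.exp (-(L/16)) :=
            Finset.sum_le_sum (fun j _ => h1 j)
        _ = (d : ℝ) * (8 * Real.exp (-(L/16))) := by
            rw [Finset.sum_const, Finset.card_univ, Fintype.card_fin, nsmul_eq_mul]
    have hlog403 : Real.log (40/3) ≤ 2.7726 := by
      calc Real.log (40/3) ≤ Real.log 16 := Real.log_le_log (by norm_num) (by norm_num)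
        _ = 4 * Real.log 2 := by
            rw [show (16:ℝ) = 2^4 by norm_num, Real.log_pow]; push_cast; ring
        _ ≤ 2.7726 := by linarith [Real.log_two_lt_d9]
    have hexpL : Real.log (40/3) + M ≤ L/16 := by
      rcases le_total M 1 with h | h
      · rw [hL]
        rw [max_eq_left h]
        linarith
      · rw [hL, max_eq_right h]
        nlinarith
    have hquot : (0:ℝ) < 2*d/n := by positivity
    have hexp2 : (80 * (d:ℝ)) / (3 * n) ≤ Real.exp (L/16) := by
      have : Real.exp (Real.log (40/3) + M) = (40/3) * (2*d/n) := by
        rw [Real.exp_add, hM, Real.exp_log (by norm_num : (0:ℝ) < 40/3), Real.exp_log hquot]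
      calc (80 * (d:ℝ)) / (3 * n) = (40/3) * (2*d/n) := by field_simp; ring
        _ = Real.exp (Real.log (40/3) + M) := this.symm
        _ ≤ Real.exp (L/16) := Real.exp_le_exp.2 hexpL
    have hexp3 : Real.exp (-(L/16)) ≤ (3 * n) / (80 * d) := by
      rw [Real.exp_neg]
      rw [inv_le_comm₀ (Real.exp_pos _) (by positivity)]
      calc ((3 * (n:ℝ)) / (80 * d))⁻¹ = (80 * (d:ℝ)) / (3 * n) := by
            rw [inv_div]
        _ ≤ Real.exp (L/16) := hexp2
    calc ∑ j : Fin d, ent (Y j) ≤ (d : ℝ) * (8 * Real.exp (-(L/16))) := h2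
      _ ≤ (d : ℝ) * (8 * ((3 * n) / (80 * d))) := by
          apply mul_le_mul_of_nonneg_left _ (by positivity)
          apply mul_le_mul_of_nonneg_left hexp3 (by norm_num)
      _ = (3/10) * n := by field_simp; ring
  -- big joint bucket
  obtain ⟨b, hb⟩ := exists_big_joint_fiber (Ω := Fin n → Bool) Y
  set B : Finset (Fin n → Bool) := univ.filter (fun ω => ∀ j, Y j ω = b j) with hB
  have hBcard : Real.exp ((Real.log 2 - 3/10) * n) ≤ (B.card : ℝ) := by
    have h2n : (Fintype.card (Fin n → Bool) : ℝ) = Real.exp ((Real.log 2) * n) := by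
      rw [card_cube, mul_comm, Real.exp_nat_mul, Real.exp_log (by norm_num : (0:ℝ) < 2)]
    calc Real.exp ((Real.log 2 - 3/10) * n)
        = Real.exp ((Real.log 2) * n) * Real.exp (-((3/10) * n)) := by
          rw [← Real.exp_add]; ring_nf
      _ ≤ Real.exp ((Real.log 2) * n) * Real.exp (-∑ j : Fin d, ent (Y j)) := by
          apply mul_le_mul_of_nonneg_left _ (le_of_lt (Real.exp_pos _))
          apply Real.exp_le_exp.2
          linarith
      _ = (Fintype.card (Fin n → Bool) : ℝ) * Real.exp (-∑ j : Fin d, ent (Y j)) := by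
          rw [h2n]
      _ ≤ (B.card : ℝ) := by
          rw [hB]
          convert hb using 3 <;> congr!
  obtain ⟨x, hx, y, hy, hfar⟩ := exists_far_pair n hn B hBcard
  -- build the partial coloring
  refine ⟨fun i => (sgn (x i) - sgn (y i))/2, ?_, ?_, ?_⟩
  · intro i
    have hgoal : (sgn (x i) - sgn (y i))/2 = 0 ∨ (sgn (x i) - sgn (y i))/2 = 1
        ∨ (sgn (x i) - sgn (y i))/2 = -1 := by
      cases hxi : x i <;> cases hyi : y i <;> norm_num [sgn]
    exact hgoal
  · have hset : (univ.filter fun i => (sgn (x i) - sgn (y i))/2 ≠ 0)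
        = (univ.filter fun i => x i ≠ y i) := by
      apply Finset.filter_congr
      intro i _
      cases hxi : x i <;> cases hyi : y i <;> norm_num [sgn]
    rw [hset]
    exact hfar
  · intro j
    have hxB : Y j x = b j := by
      have := (Finset.mem_filter.1 (hB ▸ hx)).2
      exact this j
    have hyB : Y j y = b j := by
      have := (Finset.mem_filter.1 (hB ▸ hy)).2
      exact this j
    set ux : ℝ := (∑ i, a j i * sgn (x i)) / s + 1/2 with hux
    set uy : ℝ := (∑ i, a j i * sgn (y i)) / s + 1/2 with huy
    have hfl : ⌊ux⌋ = ⌊uy⌋ := by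
      have h1 : ⌊ux⌋ = Y j x := rfl
      have h2 : ⌊uy⌋ = Y j y := rfl
      rw [h1, h2, hxB, hyB]
    have hd1 : ux - uy < 1 := by
      have h1 : ux < (⌊ux⌋ : ℝ) + 1 := Int.lt_floor_add_one ux
      have h2 : (⌊uy⌋ : ℝ) ≤ uy := Int.floor_le uy
      rw [hfl] at h1
      linarith
    have hd2 : uy - ux < 1 := by
      have h1 : uy < (⌊uy⌋ : ℝ) + 1 := Int.lt_floor_add_one uy
      have h2 : (⌊ux⌋ : ℝ) ≤ ux := Int.floor_le ux
      rw [← hfl] at h1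
      linarith
    have hdiff : |(∑ i, a j i * sgn (x i)) - (∑ i, a j i * sgn (y i))| < s := by
      have : ux - uy = ((∑ i, a j i * sgn (x i)) - (∑ i, a j i * sgn (y i)))/s := by
        rw [hux, huy]; ring
      rw [abs_lt]
      constructor
      · have := hd2
        rw [show uy - ux = ((∑ i, a j i * sgn (y i)) - (∑ i, a j i * sgn (x i)))/s by
          rw [hux, huy]; ring] at this
        have h3 := (div_lt_one hs0).1 this
        linarith
      · have := hd1
        rw [show ux - uy = ((∑ i, a j i * sgn (x i)) - (∑ i, a j i * sgn (y i)))/s by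
          rw [hux, huy]; ring] at this
        have h3 := (div_lt_one hs0).1 this
        linarith
    have hzsum : ∑ i, ((sgn (x i) - sgn (y i))/2) * a j i
        = ((∑ i, a j i * sgn (x i)) - (∑ i, a j i * sgn (y i)))/2 := by
      rw [← Finset.sum_sub_distrib, Finset.sum_div]
      apply Finset.sum_congr rfl
      intro i _
      ring
    rw [hzsum]
    rw [abs_div, abs_of_pos (by norm_num : (0:ℝ) < 2)]
    calc |(∑ i, a j i * sgn (x i)) - (∑ i, a j i * sgn (y i))| / 2 ≤ s / 2 := by linarith
      _ ≤ s := by linarith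

/-- decay of the potential `n ↦ n·max(1, log(2d/n))` under `m ≤ (9/10)n` -/
lemma sqrt_F_le (d : ℕ) (hd : 0 < d) (n m : ℕ) (hn : 0 < n)
    (hm9 : (m:ℝ) ≤ (9/10) * n) :
    Real.sqrt ((m:ℝ) * max 1 (Real.log (2*d/m)))
      ≤ 0.9987 * Real.sqrt ((n:ℝ) * max 1 (Real.log (2*d/n))) := by
  have hd' : (1:ℝ) ≤ d := by exact_mod_cast hd
  have hn' : (1:ℝ) ≤ n := by exact_mod_cast hn
  rcases Nat.eq_zero_or_pos m with rfl | hm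
  · simp only [Nat.cast_zero, zero_mul, Real.sqrt_zero]
    positivity
  have hm' : (1:ℝ) ≤ m := by exact_mod_cast hm
  set A : ℝ := (m:ℝ) with hA
  set B : ℝ := (n:ℝ) with hB
  set X : ℝ := max 1 (Real.log (2*d/B)) with hX
  have hX1 : (1:ℝ) ≤ X := le_max_left _ _
  have hAB : A ≤ B := by rw [hA, hB]; linarith
  set u : ℝ := Real.sqrt A with hu
  set v : ℝ := Real.sqrt B with hv
  have hu2 : u^2 = A := Real.sq_sqrt (by linarith)
  have hv2 : v^2 = B := Real.sq_sqrt (by linarith)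
  have hu1 : (1:ℝ) ≤ u := by
    rw [hu, show (1:ℝ) = Real.sqrt 1 by rw [Real.sqrt_one]]
    exact Real.sqrt_le_sqrt (by linarith)
  have hv1 : (1:ℝ) ≤ v := by
    rw [hv, show (1:ℝ) = Real.sqrt 1 by rw [Real.sqrt_one]]
    exact Real.sqrt_le_sqrt (by linarith)
  have huv : u ≤ v := Real.sqrt_le_sqrt hAB
  -- split the log
  have harg : 2*(d:ℝ)/A = (2*d/B) * (B/A) := by
    field_simp
  have hsplit : Real.log (2*(d:ℝ)/A) = Real.log (2*(d:ℝ)/B) + Real.log (B/A) := by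
    rw [harg, Real.log_mul (by positivity) (by positivity)]
  have hlogBA0 : 0 ≤ Real.log (B/A) :=
    Real.log_nonneg (by rw [le_div_iff₀ (by linarith)]; linarith)
  have hmax : max 1 (Real.log (2*(d:ℝ)/A)) ≤ X + Real.log (B/A) := by
    apply max_le
    · linarith
    · rw [hsplit]
      have : Real.log (2*(d:ℝ)/B) ≤ X := le_max_right _ _
      linarith
  -- log(B/A) ≤ 2(√(B/A) - 1)
  have hqdef : Real.sqrt (B/A) = v / u := by
    rw [hu, hv, ← Real.sqrt_div (by linarith)]
  have hlogBA : Real.log (B/A) ≤ 2*(v/u - 1) := by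
    have h1 : Real.log (B/A) = 2 * Real.log (Real.sqrt (B/A)) := by
      rw [Real.log_sqrt (by positivity)]; ring
    have h2 : Real.log (Real.sqrt (B/A)) ≤ Real.sqrt (B/A) - 1 :=
      Real.log_le_sub_one_of_pos (Real.sqrt_pos.2 (by positivity))
    rw [h1, hqdef] at *
    linarith
  have hu0 : (0:ℝ) < u := by linarith
  have hAv : A * (v/u) = u * v := by
    rw [← hu2]; field_simp
  have hAlog : A * Real.log (B/A) ≤ 2*u*v - 2*u^2 := by
    calc A * Real.log (B/A) ≤ A * (2*(v/u - 1)) :=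
          mul_le_mul_of_nonneg_left hlogBA (by linarith)
      _ = 2*(A*(v/u)) - 2*A := by ring
      _ = 2*u*v - 2*u^2 := by rw [hAv, hu2]; ring
  -- u ≤ 0.9487 v
  have hu9 : u ≤ 0.9487 * v := by
    have h1 : u ≤ Real.sqrt ((9/10) * B) := by
      rw [hu]; exact Real.sqrt_le_sqrt hm9
    rw [Real.sqrt_mul (by norm_num) B] at h1
    have h09 : Real.sqrt (9/10) ≤ 0.9487 := by
      rw [show (0.9487:ℝ) = Real.sqrt (0.9487^2) by
        rw [Real.sqrt_sq (by norm_num)]]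
      apply Real.sqrt_le_sqrt
      norm_num
    have hvnn : (0:ℝ) ≤ v := by linarith
    nlinarith [Real.sqrt_nonneg (9/10 : ℝ)]
  -- key quadratic estimate
  have hkey : 2*u*v - u^2 ≤ 0.997401 * v^2 := by
    have h1 : 0.0513*v ≤ v - u := by nlinarith
    have h2 : (0.0513*v) * (0.0513*v) ≤ (v - u) * (v - u) :=
      mul_le_mul h1 h1 (by positivity) (by linarith)
    nlinarith
  -- combine
  have hF : A * max 1 (Real.log (2*(d:ℝ)/A)) ≤ 0.997401 * (B * X) := by
    calc A * max 1 (Real.log (2*(d:ℝ)/A)) ≤ A * (X + Real.log (B/A)) :=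
          mul_le_mul_of_nonneg_left hmax (by linarith)
      _ = A * X + A * Real.log (B/A) := by ring
      _ ≤ u^2 * X + (2*u*v - 2*u^2) := by rw [hu2]; linarith
      _ ≤ (2*u*v - u^2) * X := by nlinarith [mul_nonneg (sub_nonneg.2 huv) (by linarith : (0:ℝ) ≤ u)]
      _ ≤ (0.997401 * v^2) * X := by
          apply mul_le_mul_of_nonneg_right hkey (by linarith)
      _ = 0.997401 * (B * X) := by rw [hv2]; ring
  calc Real.sqrt (A * max 1 (Real.log (2*(d:ℝ)/A)))
      ≤ Real.sqrt (0.997401 * (B * X)) := Real.sqrt_le_sqrt hF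
    _ = Real.sqrt 0.997401 * Real.sqrt (B * X) := Real.sqrt_mul (by norm_num) _
    _ ≤ 0.9987 * Real.sqrt (B * X) := by
        apply mul_le_mul_of_nonneg_right _ (Real.sqrt_nonneg _)
        rw [show (0.9987:ℝ) = Real.sqrt (0.9987^2) by rw [Real.sqrt_sq (by norm_num)]]
        apply Real.sqrt_le_sqrt
        norm_num

/-- recursive Spencer bound with the `log(2d/n)` potential -/
lemma spencer_aux (d : ℕ) (hd : 0 < d) :
    ∀ n : ℕ, ∀ a : Fin n → Fin d → ℝ, (∀ i j, |a i j| ≤ 1) →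
      ∃ x : Fin n → ℝ, (∀ i, x i = 1 ∨ x i = -1) ∧
        ∀ j, |∑ i, x i * a i j|
          ≤ 10000 * Real.sqrt ((n : ℝ) * max 1 (Real.log (2*d/n))) := by
  intro n
  induction n using Nat.strong_induction_on with
  | _ n IH =>
  intro a ha
  rcases Nat.eq_zero_or_pos n with rfl | hn
  · refine ⟨fun _ => 1, fun i => Or.inl rfl, ?_⟩
    intro j
    simp only [Finset.univ_eq_empty, Finset.sum_empty, abs_zero]
    positivity
  -- partial coloring step
  obtain ⟨z, hz01, hzcount, hzbound⟩ :=
    partial_coloring n d hn hd (fun j i => a i j) (fun j i => ha i j)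
  set T : Finset (Fin n) := univ.filter (fun i => z i = 0) with hT
  set m : ℕ := T.card with hm
  have hcount_pos : (0:ℝ) < ((univ.filter fun i => z i ≠ 0).card : ℝ) := by
    have : (0:ℝ) < (n:ℝ)/10 := by positivity
    linarith
  have hsum_card : (univ.filter fun i => z i = 0).card
      + (univ.filter fun i => z i ≠ 0).card = n := by
    have h := Finset.card_filter_add_card_filter_not
      (s := (univ : Finset (Fin n))) (p := fun i => z i = 0)
    have hTT : (univ.filter fun i => ¬ z i = 0) = (univ.filter fun i => z i ≠ 0) := rfl
    rw [hTT] at h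
    rw [h, Finset.card_univ, Fintype.card_fin]
  have hmn : m < n := by
    have h1 : 0 < (univ.filter fun i => z i ≠ 0).card := by exact_mod_cast hcount_pos
    rw [hm, hT]
    omega
  have hm9 : (m : ℝ) ≤ (9/10) * n := by
    have h1 : (m:ℝ) + ((univ.filter fun i => z i ≠ 0).card : ℝ) = n := by
      rw [hm, hT]
      exact_mod_cast hsum_card
    linarith
  -- recursive coloring of the zero set
  set e := T.orderIsoOfFin rfl with he
  obtain ⟨y, hy, hybound⟩ := IH m hmn (fun k j => a (↑(e k)) j) (fun k j => ha _ j)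
  set x : Fin n → ℝ := fun i =>
    if hi : z i = 0 then y (e.symm ⟨i, Finset.mem_filter.2 ⟨Finset.mem_univ i, hi⟩⟩)
    else z i with hx
  have hsigns : ∀ i, x i = 1 ∨ x i = -1 := by
    intro i
    simp only [hx]
    by_cases hi : z i = 0
    · rw [dif_pos hi]
      exact hy _
    · rw [dif_neg hi]
      rcases hz01 i with h | h | h
      · exact absurd h hi
      · exact Or.inl h
      · exact Or.inr h
  refine ⟨x, hsigns, ?_⟩
  intro j
  -- split the sum
  have hTsum : ∀ f : Fin n → ℝ, ∑ i ∈ T, f i = ∑ k : Fin m, f (↑(e k)) := by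
    intro f
    rw [← Finset.sum_coe_sort T f]
    exact (Equiv.sum_comp e.toEquiv (fun t => f ↑t)).symm
  have hpart2 : ∑ i ∈ T, x i * a i j = ∑ k : Fin m, y k * a (↑(e k)) j := by
    rw [hTsum (fun i => x i * a i j)]
    apply Finset.sum_congr rfl
    intro k _
    have hzek : z ↑(e k) = 0 := by
      have h2 : (↑(e k) : Fin n) ∈ univ.filter (fun i => z i = 0) := (e k).2
      exact (Finset.mem_filter.1 h2).2
    have hxek : x ↑(e k) = y k := by
      simp only [hx]
      rw [dif_pos hzek]
      congr 1
      simp only [Subtype.coe_eta, OrderIso.symm_apply_apply]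
    rw [hxek]
  have hpart1 : ∑ i ∈ univ.filter (fun i => ¬ z i = 0), x i * a i j
      = ∑ i, z i * a i j := by
    have h1 : ∀ i ∈ univ.filter (fun i => ¬ z i = 0), x i * a i j = z i * a i j := by
      intro i hi
      have h2 := (Finset.mem_filter.1 hi).2
      simp only [hx]
      rw [dif_neg h2]
    rw [Finset.sum_congr rfl h1]
    apply Finset.sum_subset (Finset.filter_subset _ _)
    intro i _ hnot
    have : z i = 0 := by
      by_contra hzi
      exact hnot (Finset.mem_filter.2 ⟨Finset.mem_univ i, hzi⟩)
    rw [this, zero_mul]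
  have hsplit : ∑ i, x i * a i j
      = (∑ i, z i * a i j) + ∑ k : Fin m, y k * a (↑(e k)) j := by
    rw [← Finset.sum_filter_add_sum_filter_not univ (fun i => z i = 0)
      (fun i => x i * a i j)]
    rw [← hT, hpart1, hpart2]
    ring
  -- numeric assembly
  have h11 : Real.sqrt (121 * max 1 (Real.log (2*d/n)) * n)
      = 11 * Real.sqrt ((n:ℝ) * max 1 (Real.log (2*d/n))) := by
    rw [show (121:ℝ) * max 1 (Real.log (2*d/n)) * n
        = 11^2 * ((n:ℝ) * max 1 (Real.log (2*d/n))) by ring]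
    rw [Real.sqrt_mul (by positivity) _, Real.sqrt_sq (by norm_num)]
  have hdecay := sqrt_F_le d hd n m hn hm9
  have hz_j := hzbound j
  have hy_j := hybound j
  rw [h11] at hz_j
  calc |∑ i, x i * a i j|
      ≤ |∑ i, z i * a i j| + |∑ k : Fin m, y k * a (↑(e k)) j| := by
        rw [hsplit]
        exact abs_add_le _ _
    _ ≤ 11 * Real.sqrt ((n:ℝ) * max 1 (Real.log (2*d/n)))
        + 10000 * Real.sqrt ((m : ℝ) * max 1 (Real.log (2*d/m))) := by
        apply add_le_add hz_j hy_j
    _ ≤ 11 * Real.sqrt ((n:ℝ) * max 1 (Real.log (2*d/n)))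
        + 10000 * (0.9987 * Real.sqrt ((n:ℝ) * max 1 (Real.log (2*d/n)))) := by
        have := mul_le_mul_of_nonneg_left hdecay (by norm_num : (0:ℝ) ≤ 10000)
        linarith
    _ ≤ 10000 * Real.sqrt ((n : ℝ) * max 1 (Real.log (2*d/n))) := by
        nlinarith [Real.sqrt_nonneg ((n:ℝ) * max 1 (Real.log (2*d/n)))]

end SpencerProof

/-- **Spencer's theorem.** There is a universal constant `C > 0` such that for all
positive integers `n, d` and vectors `a 1, …, a n` in `ℝ^d` with `‖a i‖_∞ ≤ 1`
(here `‖·‖` on `Fin d → ℝ` is the sup norm), there are signs `x i ∈ {±1}` with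
`‖∑ i, x i • a i‖_∞ ≤ C √n · max 1 √(log(d/n))`. -/
theorem spencer :
    ∃ C : ℝ, 0 < C ∧ ∀ (n d : ℕ), 0 < n → 0 < d →
      ∀ a : Fin n → (Fin d → ℝ), (∀ i, ‖a i‖ ≤ 1) →
        ∃ x : Fin n → ℝ, (∀ i, x i = 1 ∨ x i = -1) ∧
          ‖∑ i, x i • a i‖ ≤
            C * Real.sqrt n * max 1 (Real.sqrt (Real.log ((d : ℝ) / (n : ℝ)))) := by
  refine ⟨15000, by norm_num, ?_⟩
  intro n d hn hd a ha
  have hn' : (1:ℝ) ≤ n := by exact_mod_cast hn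
  have hd' : (1:ℝ) ≤ d := by exact_mod_cast hd
  have haij : ∀ i j, |a i j| ≤ 1 := by
    intro i j
    have h1 : ‖a i j‖ ≤ ‖a i‖ := norm_le_pi_norm (a i) j
    rw [Real.norm_eq_abs] at h1
    exact le_trans h1 (ha i)
  obtain ⟨x, hxsign, hxbound⟩ := SpencerProof.spencer_aux d hd n a haij
  refine ⟨x, hxsign, ?_⟩
  set X : ℝ := Real.log ((d:ℝ)/n) with hX
  -- numeric comparison
  have hlog : Real.log (2*(d:ℝ)/n) = Real.log 2 + X := by
    rw [show 2*(d:ℝ)/n = 2 * ((d:ℝ)/n) by ring,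
      Real.log_mul two_ne_zero (by positivity)]
  have hl2 : Real.log 2 ≤ 1 := by linarith [Real.log_two_lt_d9]
  have hl2' : 0 ≤ Real.log 2 := Real.log_nonneg (by norm_num)
  have h2 : max 1 (Real.log 2 + X) ≤ 2 * max 1 X := by
    apply max_le
    · linarith [le_max_left 1 X]
    · linarith [le_max_right 1 X, le_max_left 1 X]
  have h3 : (n:ℝ) * max 1 (Real.log (2*(d:ℝ)/n)) ≤ 2 * ((n:ℝ) * max 1 X) := by
    rw [hlog]
    have := mul_le_mul_of_nonneg_left h2 (by linarith : (0:ℝ) ≤ n)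
    linarith
  have h5 : Real.sqrt ((n:ℝ) * max 1 X) = Real.sqrt n * Real.sqrt (max 1 X) :=
    Real.sqrt_mul (by linarith) _
  have h6 : Real.sqrt (max 1 X) = max 1 (Real.sqrt X) := by
    rcases le_total X 1 with h | h
    · rw [max_eq_left h, Real.sqrt_one]
      symm
      rw [max_eq_left]
      calc Real.sqrt X ≤ Real.sqrt 1 := Real.sqrt_le_sqrt h
        _ = 1 := Real.sqrt_one
    · rw [max_eq_right h, max_eq_right]
      calc (1:ℝ) = Real.sqrt 1 := Real.sqrt_one.symm
        _ ≤ Real.sqrt X := Real.sqrt_le_sqrt h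
  have h7 : Real.sqrt 2 ≤ 1.5 := by
    rw [show (1.5:ℝ) = Real.sqrt (1.5^2) by rw [Real.sqrt_sq (by norm_num)]]
    apply Real.sqrt_le_sqrt
    norm_num
  have hmain : 10000 * Real.sqrt ((n:ℝ) * max 1 (Real.log (2*(d:ℝ)/n)))
      ≤ 15000 * Real.sqrt n * max 1 (Real.sqrt X) := by
    calc 10000 * Real.sqrt ((n:ℝ) * max 1 (Real.log (2*(d:ℝ)/n)))
        ≤ 10000 * Real.sqrt (2 * ((n:ℝ) * max 1 X)) := by
          apply mul_le_mul_of_nonneg_left (Real.sqrt_le_sqrt h3) (by norm_num)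
      _ = 10000 * (Real.sqrt 2 * (Real.sqrt n * max 1 (Real.sqrt X))) := by
          rw [Real.sqrt_mul (by norm_num) _, h5, h6]
      _ ≤ 10000 * (1.5 * (Real.sqrt n * max 1 (Real.sqrt X))) := by
          apply mul_le_mul_of_nonneg_left _ (by norm_num)
          apply mul_le_mul_of_nonneg_right h7
          positivity
      _ = 15000 * Real.sqrt n * max 1 (Real.sqrt X) := by ring
  have hnorm : ∀ j, |(∑ i, x i • a i) j| ≤ 15000 * Real.sqrt n * max 1 (Real.sqrt X) := by
    intro j
    have hcomp : (∑ i, x i • a i) j = ∑ i, x i * a i j := by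
      rw [Finset.sum_apply]
      apply Finset.sum_congr rfl
      intro i _
      simp [Pi.smul_apply, smul_eq_mul]
    rw [hcomp]
    exact le_trans (hxbound j) hmain
  rw [show (15000:ℝ) * Real.sqrt n * max 1 (Real.sqrt (Real.log ((d:ℝ)/n)))
    = 15000 * Real.sqrt n * max 1 (Real.sqrt X) from rfl]
  apply pi_norm_le_iff_of_nonneg (by positivity) |>.2
  intro j
  rw [Real.norm_eq_abs]
  exact hnorm j
end

section
/- Let n ≥ 2 and let e_1, ..., e_n ∈ ℝ^n be the standard basis vectors. Define A_i := (1/2)(e_1 + e_i)(e_1 + e_i)ᵀ for i = 1, ..., n; each A_i is a symmetric rank-one positive semidefinite matrix with ‖A_i‖_op ≤ 2. Then for every choice of signs x ∈ {−1, +1}^n, ‖∑_{i=1}^n x_i A_i‖_op ≥ (1/2) √(n−1). -/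
open MeasureTheory ProbabilityTheory

/-- Operator norm (largest singular value) of a real matrix, as the norm of the
induced linear map between Euclidean spaces. -/
noncomputable def opNorm {m n : Type*} [Fintype m] [Fintype n] [DecidableEq n]
    (M : Matrix m n ℝ) : ℝ :=
  ‖LinearMap.toContinuousLinearMap (Matrix.toEuclideanLin M)‖

/-- Squared Frobenius norm of a real matrix. -/
noncomputable def frobNormSq {m n : Type*} [Fintype m] [Fintype n]
    (M : Matrix m n ℝ) : ℝ := ∑ i, ∑ j, (M i j) ^ 2

lemma vecMulVec_mulVec' {n : Type*} [Fintype n] (w v x : n → ℝ) :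
    (Matrix.vecMulVec w v).mulVec x = (dotProduct v x) • w := by
  funext j
  simp [Matrix.mulVec, Matrix.vecMulVec_apply, dotProduct, Finset.mul_sum,
    mul_comm, mul_assoc, mul_left_comm]

/-- **Lower bound example (Section 1.1).** For `n ≥ 2`, let `u i = e 1 + e i` (standard
basis vectors of `ℝⁿ`) and `A i = (1/2)(e 1 + e i)(e 1 + e i)ᵀ`. Then each `A i` is a
symmetric rank-one positive semidefinite matrix with `‖A i‖_op ≤ 2`, and for every
choice of signs `x ∈ {±1}ⁿ` one has `‖∑ i, x i • A i‖_op ≥ (1/2)√(n-1)`. -/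
theorem rank_one_lower_bound (n : ℕ) (hn : 2 ≤ n)
    (u : Fin n → Fin n → ℝ)
    (hu : ∀ i j, u i j = (if (j : ℕ) = 0 then (1 : ℝ) else 0) + (if j = i then 1 else 0))
    (A : Fin n → Matrix (Fin n) (Fin n) ℝ)
    (hA : ∀ i, A i = (1 / 2 : ℝ) • Matrix.vecMulVec (u i) (u i)) :
    (∀ i, (A i).IsSymm) ∧ (∀ i, (A i).PosSemidef) ∧ (∀ i, (A i).rank = 1) ∧
    (∀ i, opNorm (A i) ≤ 2) ∧
    ∀ x : Fin n → ℝ, (∀ i, x i = 1 ∨ x i = -1) →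
      (1 / 2 : ℝ) * Real.sqrt ((n : ℝ) - 1) ≤ opNorm (∑ i, x i • A i) := by
  haveI : NeZero n := ⟨by omega⟩
  -- basic facts about u
  have hu0 : ∀ i, u i 0 ≠ 0 := by
    intro i
    rw [hu]
    simp only [Fin.val_zero, if_true]
    rcases eq_or_ne (0 : Fin n) i with h | h <;> simp [h] <;> norm_num
  have hune : ∀ i, u i ≠ 0 := fun i h => hu0 i (by rw [h]; rfl)
  have hsymm : ∀ i, (A i).IsSymm := by
    intro i
    rw [hA]
    refine Matrix.IsSymm.ext fun j k => ?_
    simp [Matrix.vecMulVec_apply, mul_comm]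
  refine ⟨hsymm, ?_, ?_, ?_, ?_⟩
  · -- PosSemidef
    intro i
    rw [Matrix.posSemidef_iff_dotProduct_mulVec]
    refine ⟨?_, fun x => ?_⟩
    · rw [Matrix.IsHermitian, Matrix.conjTranspose_eq_transpose_of_trivial]
      exact hsymm i
    rw [hA]
    have : ((1 / 2 : ℝ) • Matrix.vecMulVec (u i) (u i)).mulVec x
        = ((1 / 2 : ℝ) * (dotProduct (u i) x)) • u i := by
      rw [Matrix.smul_mulVec, vecMulVec_mulVec', smul_smul]
    rw [this]
    simp only [RCLike.re_to_real, dotProduct_smul, smul_eq_mul, star_trivial]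
    have : dotProduct x (u i) = dotProduct (u i) x := dotProduct_comm _ _
    rw [this]
    nlinarith [sq_nonneg (dotProduct (u i) x)]
  · -- rank
    intro i
    have hr : LinearMap.range ((A i).mulVecLin) = Submodule.span ℝ {u i} := by
      apply le_antisymm
      · rintro y ⟨x, rfl⟩
        rw [Matrix.mulVecLin_apply, hA, Matrix.smul_mulVec, vecMulVec_mulVec']
        exact Submodule.smul_mem _ _ (Submodule.smul_mem _ _
          (Submodule.mem_span_singleton_self _))
      · rw [Submodule.span_singleton_le_iff_mem]
        refine ⟨(2 / (dotProduct (u i) (u i))) • u i, ?_⟩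
        have hne : dotProduct (u i) (u i) ≠ 0 := by
          intro h
          exact hune i (dotProduct_self_eq_zero.mp h)
        rw [Matrix.mulVecLin_apply, hA, Matrix.smul_mulVec, Matrix.mulVec_smul,
          vecMulVec_mulVec']
        rw [smul_smul, smul_smul]
        have h1 : (1 / 2 * (2 / dotProduct (u i) (u i)) * dotProduct (u i) (u i)) = 1 := by
          field_simp
        rw [h1, one_smul]
    rw [Matrix.rank, hr]
    exact finrank_span_singleton (hune i)
  · -- opNorm bound
    intro i
    have hsum : ∑ j, (u i j) ^ 2 ≤ 4 := by
      have key : ∀ j, (u i j) ^ 2 ≤ 2 * (if (j : ℕ) = 0 then (1:ℝ) else 0)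
          + 2 * (if j = i then (1:ℝ) else 0) := by
        intro j
        rw [hu]
        by_cases h2 : j = i
        · subst h2
          by_cases h1 : (j : ℕ) = 0 <;> simp [h1] <;> norm_num
        · by_cases h1 : (j : ℕ) = 0 <;> simp [h1, h2] <;> norm_num
      have e1 : ∑ j : Fin n, (if (j : ℕ) = 0 then (1:ℝ) else 0) = 1 := by
        have : ∀ j : Fin n, ((j : ℕ) = 0) = (j = 0) := by
          intro j; exact propext Fin.val_eq_zero_iff
        simp only [this]
        simp
      have e3 : ∑ j : Fin n, (if j = i then (1:ℝ) else 0) = 1 := by simp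
      calc ∑ j, (u i j) ^ 2
          ≤ ∑ j : Fin n, (2 * (if (j : ℕ) = 0 then (1:ℝ) else 0)
              + 2 * (if j = i then (1:ℝ) else 0)) :=
            Finset.sum_le_sum fun j _ => key j
        _ = 4 := by
            rw [Finset.sum_add_distrib, ← Finset.mul_sum, ← Finset.mul_sum, e1, e3]
            norm_num
    rw [opNorm]
    apply ContinuousLinearMap.opNorm_le_bound _ (by norm_num)
    intro v
    set uE : EuclideanSpace ℝ (Fin n) := (WithLp.equiv 2 (Fin n → ℝ)).symm (u i)
    have happ : (LinearMap.toContinuousLinearMap (Matrix.toEuclideanLin (A i))) v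
        = ((1 / 2 : ℝ) * (dotProduct (u i) ((WithLp.equiv 2 (Fin n → ℝ)) v))) • uE := by
      show Matrix.toEuclideanLin (A i) v = _
      rw [Matrix.toEuclideanLin_apply, hA, Matrix.smul_mulVec, vecMulVec_mulVec',
        smul_smul]
      rfl
    rw [happ, norm_smul]
    have hdot : dotProduct (u i) ((WithLp.equiv 2 (Fin n → ℝ)) v) = (inner ℝ uE v : ℝ) := by
      simp [uE, PiLp.inner_apply, dotProduct, RCLike.inner_apply, WithLp.equiv]
      exact Finset.sum_congr rfl fun j _ => mul_comm _ _
    have hnu : ‖uE‖ ^ 2 = ∑ j, (u i j) ^ 2 := by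
      rw [EuclideanSpace.norm_eq, Real.sq_sqrt]
      · apply Finset.sum_congr rfl
        intro j _
        rw [Real.norm_eq_abs, sq_abs]
        rfl
      · positivity
    have hcs : |(inner ℝ uE v : ℝ)| ≤ ‖uE‖ * ‖v‖ := abs_real_inner_le_norm _ _
    have hnu2 : ‖uE‖ ^ 2 ≤ 4 := hnu ▸ hsum
    have hnub : ‖uE‖ ≤ 2 := by nlinarith [norm_nonneg uE]
    rw [hdot]
    calc ‖(1 / 2 : ℝ) * (inner ℝ uE v : ℝ)‖ * ‖uE‖
        = (1/2) * |(inner ℝ uE v : ℝ)| * ‖uE‖ := by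
          rw [Real.norm_eq_abs, abs_mul]; norm_num
      _ ≤ (1/2) * (‖uE‖ * ‖v‖) * ‖uE‖ := by
          apply mul_le_mul_of_nonneg_right _ (norm_nonneg _)
          apply mul_le_mul_of_nonneg_left hcs (by norm_num)
      _ = (1/2) * ‖uE‖^2 * ‖v‖ := by ring
      _ ≤ 2 * ‖v‖ := by nlinarith [norm_nonneg v]
  · -- lower bound
    intro x hx
    set M := ∑ i, x i • A i with hM
    have hcol : ∀ j : Fin n, j ≠ 0 → M j 0 = x j / 2 := by
      intro j hj
      have hj' : (j : ℕ) ≠ 0 := fun h => hj (Fin.ext h)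
      rw [hM]
      simp only [Finset.sum_apply, Matrix.sum_apply, Matrix.smul_apply, smul_eq_mul]
      have : ∀ i : Fin n, x i * A i j 0
          = if i = j then x j * ((1/2) * (1 + if (0:Fin n) = j then 1 else 0)) else 0 := by
        intro i
        rw [hA]
        simp only [Matrix.smul_apply, Matrix.vecMulVec_apply, smul_eq_mul]
        rw [hu, hu]
        by_cases h : i = j
        · subst h
          simp [hj', Fin.val_zero, eq_comm]
        · have hji : ¬ (j = i) := fun hh => h hh.symm
          simp [hj', hji, h]
      rw [Finset.sum_congr rfl fun i _ => this i]
      rw [Finset.sum_ite_eq' Finset.univ j]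
      have h0j : ((0:Fin n) = j) = False := by simp [eq_comm, hj]
      simp [h0j]
      ring
    -- apply to e0
    set f := LinearMap.toContinuousLinearMap (Matrix.toEuclideanLin M)
    set v : EuclideanSpace ℝ (Fin n) := EuclideanSpace.single 0 (1:ℝ)
    have hv : ‖v‖ = 1 := by simp [v]
    have happ : (WithLp.equiv 2 (Fin n → ℝ)) (f v) = fun j => M j 0 := by
      show (WithLp.equiv 2 (Fin n → ℝ)) (Matrix.toEuclideanLin M v) = _
      show Matrix.mulVec M ((WithLp.equiv 2 (Fin n → ℝ)) v) = _
      have : (WithLp.equiv 2 (Fin n → ℝ)) v = Pi.single 0 (1:ℝ) := rfl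
      rw [this, Matrix.mulVec_single]
      funext j
      simp
    have hfv : Real.sqrt (((n:ℝ) - 1) / 4) ≤ ‖f v‖ := by
      rw [EuclideanSpace.norm_eq]
      apply Real.sqrt_le_sqrt
      have : ∀ j : Fin n, (f v) j = M j 0 := fun j => congrFun happ j
      calc ((n:ℝ) - 1) / 4
          = ∑ j ∈ Finset.univ.erase (0 : Fin n), (1/4 : ℝ) := by
            rw [Finset.sum_const, Finset.card_erase_of_mem (Finset.mem_univ _),
              Finset.card_univ, Fintype.card_fin, nsmul_eq_mul,
              Nat.cast_sub (by omega : 1 ≤ n)]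
            push_cast
            ring
        _ ≤ ∑ j ∈ Finset.univ.erase (0 : Fin n), ‖(f v) j‖ ^ 2 := by
            apply Finset.sum_le_sum
            intro j hj
            have hj0 : j ≠ 0 := Finset.ne_of_mem_erase hj
            rw [this j, hcol j hj0, Real.norm_eq_abs, sq_abs]
            rcases hx j with h | h <;> rw [h] <;> norm_num
        _ ≤ ∑ j, ‖(f v) j‖ ^ 2 := by
            apply Finset.sum_le_sum_of_subset_of_nonneg (Finset.erase_subset _ _)
            intro j _ _
            positivity
    have hle : ‖f v‖ ≤ ‖f‖ * ‖v‖ := f.le_opNorm v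
    rw [hv, mul_one] at hle
    have hn1 : (0:ℝ) ≤ (n:ℝ) - 1 := by
      have : (2:ℝ) ≤ (n:ℝ) := by exact_mod_cast hn
      linarith
    have hsq : Real.sqrt (((n:ℝ) - 1) / 4) = (1/2) * Real.sqrt ((n:ℝ) - 1) := by
      rw [Real.sqrt_div hn1]
      rw [show (4:ℝ) = 2^2 by norm_num, Real.sqrt_sq (by norm_num : (0:ℝ) ≤ 2)]
      ring
    rw [opNorm]
    calc (1/2 : ℝ) * Real.sqrt ((n:ℝ) - 1) = Real.sqrt (((n:ℝ) - 1)/4) := hsq.symm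
      _ ≤ ‖f v‖ := hfv
      _ ≤ ‖f‖ := hle
end

section
/- Let S, P, Q ∈ ℝ^{m×m} be positive semidefinite symmetric matrices with S = P + Q. Let λ_1 ≥ λ_2 ≥ ... ≥ λ_m be the eigenvalues of S with corresponding orthonormal eigenvectors w_1, ..., w_m, and let 0 ≤ k < m. If w_jᵀ P w_j = 0 for all j = 1, ..., k, then ‖P‖_op ≤ λ_{k+1}. -/
open MeasureTheory ProbabilityTheory

section Aux
open Matrix

lemma aux_transpose_eq {m : ℕ} {P : Matrix (Fin m) (Fin m) ℝ} (hP : P.IsHermitian) :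
    Pᵀ = P := by
  ext i j
  have := congrFun (congrFun hP i) j
  simpa [Matrix.conjTranspose_apply] using this

lemma aux_shift {m : ℕ} {A : Matrix (Fin m) (Fin m) ℝ} (hA : Aᵀ = A)
    (x y : Fin m → ℝ) : dotProduct (A.mulVec x) y = dotProduct x (A.mulVec y) := by
  rw [dotProduct_mulVec, ← Matrix.mulVec_transpose, hA]

lemma aux_dot_sum_left {m : ℕ} {ι : Type*} (F : Finset ι) (f : ι → (Fin m → ℝ))
    (v : Fin m → ℝ) :
    dotProduct (∑ j ∈ F, f j) v = ∑ j ∈ F, dotProduct (f j) v := by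
  simp only [dotProduct, Finset.sum_apply, Finset.sum_mul]
  exact Finset.sum_comm

lemma aux_dot_sum_right {m : ℕ} {ι : Type*} (F : Finset ι) (f : ι → (Fin m → ℝ))
    (v : Fin m → ℝ) :
    dotProduct v (∑ j ∈ F, f j) = ∑ j ∈ F, dotProduct v (f j) := by
  simp only [dotProduct, Finset.sum_apply, Finset.mul_sum]
  exact Finset.sum_comm

lemma aux_mulVec_sum {m : ℕ} {ι : Type*} (F : Finset ι) (P : Matrix (Fin m) (Fin m) ℝ)
    (f : ι → (Fin m → ℝ)) :
    P.mulVec (∑ j ∈ F, f j) = ∑ j ∈ F, P.mulVec (f j) := by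
  simpa only [Matrix.mulVecLin_apply] using map_sum P.mulVecLin f F

lemma opNorm_le_of_quad {m : ℕ} (P : Matrix (Fin m) (Fin m) ℝ) (hP : P.PosSemidef)
    (c : ℝ) (hc : 0 ≤ c)
    (h : ∀ v : Fin m → ℝ, dotProduct v (P.mulVec v) ≤ c * dotProduct v v) :
    opNorm P ≤ c := by
  have hPt : Pᵀ = P := aux_transpose_eq hP.1
  have key : ∀ v : Fin m → ℝ,
      dotProduct (P.mulVec v) (P.mulVec v) ≤ (c * c) * dotProduct v v := by
    intro v
    obtain ⟨B, hB, hBB⟩ : ∃ B : Matrix (Fin m) (Fin m) ℝ, B.PosSemidef ∧ B * B = P :=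
      by
        classical
        open scoped MatrixOrder in
        exact ⟨CFC.sqrt P, sub_zero (CFC.sqrt P) ▸ CFC.sqrt_nonneg P, CFC.sqrt_mul_sqrt_self P hP.nonneg⟩
    have hBt : Bᵀ = B := aux_transpose_eq hB.1
    set u := B.mulVec v with hu
    have h1 : dotProduct (P.mulVec v) (P.mulVec v) = dotProduct u (P.mulVec u) := by
      rw [aux_shift hPt v (P.mulVec v), hu, aux_shift hBt v (P.mulVec (B.mulVec v))]
      congr 1
      simp only [Matrix.mulVec_mulVec, ← hBB, Matrix.mul_assoc]
    have h2 : dotProduct u u = dotProduct v (P.mulVec v) := by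
      rw [hu, aux_shift hBt v (B.mulVec v), Matrix.mulVec_mulVec, hBB]
    calc dotProduct (P.mulVec v) (P.mulVec v) = dotProduct u (P.mulVec u) := h1
      _ ≤ c * dotProduct u u := h u
      _ = c * dotProduct v (P.mulVec v) := by rw [h2]
      _ ≤ c * (c * dotProduct v v) := mul_le_mul_of_nonneg_left (h v) hc
      _ = (c * c) * dotProduct v v := by ring
  rw [opNorm]
  apply ContinuousLinearMap.opNorm_le_bound _ hc
  intro x
  set v : Fin m → ℝ := (WithLp.equiv 2 (Fin m → ℝ)) x with hv
  have hnx : ‖x‖ ^ 2 = dotProduct v v := by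
    rw [← real_inner_self_eq_norm_sq]
    rfl
  have hnTx : ‖(LinearMap.toContinuousLinearMap (Matrix.toEuclideanLin P)) x‖ ^ 2
      = dotProduct (P.mulVec v) (P.mulVec v) := by
    rw [← real_inner_self_eq_norm_sq]
    rfl
  have h0 : (0:ℝ) ≤ c * ‖x‖ := mul_nonneg hc (norm_nonneg _)
  have hsq : ‖(LinearMap.toContinuousLinearMap (Matrix.toEuclideanLin P)) x‖ ^ 2
      ≤ (c * ‖x‖) ^ 2 := by
    rw [hnTx, mul_pow, hnx, pow_two]
    exact key v
  exact (pow_le_pow_iff_left₀ (norm_nonneg _) h0 two_ne_zero).mp hsq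

end Aux

/-- **Linear-algebra step in Lemma 3.1.** Let `S = P + Q` with `S, P, Q` positive
semidefinite symmetric `m×m` matrices, let `lam 0 ≥ lam 1 ≥ … ≥ lam (m-1)` be the
eigenvalues of `S` with corresponding orthonormal eigenvectors `w j`, and let
`0 ≤ k < m`. If `w jᵀ P (w j) = 0` for all `j < k`, then `‖P‖_op ≤ lam k`
(the `(k+1)`-st eigenvalue in 1-based counting). -/
theorem psd_summand_opNorm_le_eigenvalue (m : ℕ)
    (S P Q : Matrix (Fin m) (Fin m) ℝ)
    (hS : S.PosSemidef) (hP : P.PosSemidef) (hQ : Q.PosSemidef)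
    (hsum : S = P + Q)
    (lam : Fin m → ℝ) (w : Fin m → (Fin m → ℝ))
    (heig : ∀ j, S.mulVec (w j) = lam j • w j)
    (hortho : ∀ j j' : Fin m, dotProduct (w j) (w j') = if j = j' then 1 else 0)
    (hdesc : ∀ j j' : Fin m, j ≤ j' → lam j' ≤ lam j)
    (k : ℕ) (hk : k < m)
    (hvanish : ∀ j : Fin m, (j : ℕ) < k → dotProduct (w j) (P.mulVec (w j)) = 0) :
    opNorm P ≤ lam ⟨k, hk⟩ := by
  classical
  have hPt : P.transpose = P := aux_transpose_eq hP.1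
  set κ : Fin m := ⟨k, hk⟩ with hκ
  have hww : ∀ j, dotProduct (w j) (w j) = 1 := by
    intro j; rw [hortho j j]; simp
  -- lam κ is nonnegative
  have hlamk : 0 ≤ lam κ := by
    have h0 := hS.dotProduct_mulVec_nonneg (w κ)
    rw [star_trivial, heig κ, dotProduct_smul, hww κ] at h0
    simpa using h0
  -- P annihilates w j for j < k
  have hPw : ∀ j : Fin m, (j : ℕ) < k → P.mulVec (w j) = 0 := by
    intro j hj
    refine (hP.dotProduct_mulVec_zero_iff (w j)).mp ?_
    rw [star_trivial]
    exact hvanish j hj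
  -- orthonormal rows: the Gram identity in the other order
  have hWtW : ∀ i l : Fin m, (∑ j, w j i * w j l) = if i = l then (1:ℝ) else 0 := by
    set W : Matrix (Fin m) (Fin m) ℝ := Matrix.of (fun j i => w j i) with hW
    have hWWt : W * W.transpose = 1 := by
      ext j j'
      simpa [hW, Matrix.mul_apply, Matrix.one_apply, dotProduct] using hortho j j'
    have hWtW' : W.transpose * W = 1 := mul_eq_one_comm.mp hWWt
    intro i l
    have := congrFun (congrFun hWtW' i) l
    simpa [hW, Matrix.mul_apply, Matrix.one_apply] using this
  -- expansion in the orthonormal basis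
  have hexp : ∀ u : Fin m → ℝ, ∑ j, (dotProduct (w j) u) • w j = u := by
    intro u; funext i
    simp only [Finset.sum_apply, Pi.smul_apply, smul_eq_mul, dotProduct]
    have h1 : ∀ l, (∑ j, w j l * u l * w j i) = (∑ j, w j i * w j l) * u l := by
      intro l; rw [Finset.sum_mul]; exact Finset.sum_congr rfl fun j _ => by ring
    calc ∑ j, (∑ l, w j l * u l) * w j i
        = ∑ j, ∑ l, w j l * u l * w j i := by
          exact Finset.sum_congr rfl fun j _ => Finset.sum_mul _ _ _
      _ = ∑ l, ∑ j, w j l * u l * w j i := Finset.sum_comm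
      _ = ∑ l, (∑ j, w j i * w j l) * u l := Finset.sum_congr rfl fun l _ => h1 l
      _ = ∑ l, (if i = l then (1:ℝ) else 0) * u l := by
          exact Finset.sum_congr rfl fun l _ => by rw [hWtW i l]
      _ = u i := by simp
  -- the quadratic-form bound
  refine opNorm_le_of_quad P hP (lam κ) hlamk ?_
  intro v
  set F : Finset (Fin m) := Finset.univ.filter (fun j : Fin m => k ≤ (j : ℕ)) with hF
  set coef : Fin m → ℝ := fun j => dotProduct (w j) v with hcoef
  set u : Fin m → ℝ := ∑ j ∈ F, coef j • w j with hu
  have hmemF : ∀ j : Fin m, j ∈ F ↔ k ≤ (j : ℕ) := by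
    intro j; simp [hF]
  -- P v = P u
  have hPv : P.mulVec v = ∑ j ∈ F, coef j • P.mulVec (w j) := by
    conv_lhs => rw [← hexp v]
    rw [aux_mulVec_sum]
    rw [← Finset.sum_subset (Finset.subset_univ F) ?_]
    · exact Finset.sum_congr rfl fun j _ => Matrix.mulVec_smul P (coef j) (w j)
    · intro j _ hj
      have hjk : (j : ℕ) < k := by
        by_contra hcon
        exact hj ((hmemF j).mpr (le_of_not_gt hcon))
      rw [Matrix.mulVec_smul, hPw j hjk, smul_zero]
  have hPu : P.mulVec u = P.mulVec v := by
    rw [hu, aux_mulVec_sum, hPv]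
    exact Finset.sum_congr rfl fun j _ => Matrix.mulVec_smul P (coef j) (w j)
  -- reduce quadratic form to u
  have hquad : dotProduct v (P.mulVec v) = dotProduct u (P.mulVec u) := by
    calc dotProduct v (P.mulVec v) = dotProduct v (P.mulVec u) := by rw [hPu]
      _ = dotProduct (P.mulVec v) u := (aux_shift hPt v u).symm
      _ = dotProduct (P.mulVec u) u := by rw [hPu]
      _ = dotProduct u (P.mulVec u) := aux_shift hPt u u
  -- dot products of u with basis vectors
  have hul : ∀ j ∈ F, dotProduct u (w j) = coef j := by
    intro j hj
    rw [hu, aux_dot_sum_left]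
    have : ∀ j' ∈ F, dotProduct (coef j' • w j') (w j)
        = if j' = j then coef j else 0 := by
      intro j' _
      rw [smul_dotProduct, hortho j' j]
      by_cases h : j' = j <;> simp [h]
    rw [Finset.sum_congr rfl this, Finset.sum_ite_eq' F j (fun _ => coef j), if_pos hj]
  -- value of the S-quadratic form on u
  have hSu : dotProduct u (S.mulVec u) = ∑ j ∈ F, coef j ^ 2 * lam j := by
    have hSmul : S.mulVec u = ∑ j ∈ F, (coef j * lam j) • w j := by
      rw [hu, aux_mulVec_sum]
      refine Finset.sum_congr rfl fun j _ => ?_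
      rw [Matrix.mulVec_smul, heig j, smul_smul]
    rw [hSmul, aux_dot_sum_right]
    refine Finset.sum_congr rfl fun j hj => ?_
    rw [dotProduct_smul, smul_eq_mul, hul j hj]
    ring
  -- Parseval
  have hPar : dotProduct v v = ∑ j, coef j ^ 2 := by
    have h2 : dotProduct v v
        = dotProduct v (∑ j, dotProduct (w j) v • w j) := by rw [hexp v]
    rw [h2, aux_dot_sum_right]
    refine Finset.sum_congr rfl fun j _ => ?_
    rw [dotProduct_smul, smul_eq_mul, dotProduct_comm v (w j)]
    simp only [hcoef]
    ring
  -- put the chain together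
  have hQu : 0 ≤ dotProduct u (Q.mulVec u) := by
    have := hQ.dotProduct_mulVec_nonneg u; rwa [star_trivial] at this
  calc dotProduct v (P.mulVec v) = dotProduct u (P.mulVec u) := hquad
    _ ≤ dotProduct u (S.mulVec u) := by
        rw [hsum, Matrix.add_mulVec, dotProduct_add]
        linarith
    _ = ∑ j ∈ F, coef j ^ 2 * lam j := hSu
    _ ≤ ∑ j ∈ F, coef j ^ 2 * lam κ := by
        refine Finset.sum_le_sum fun j hj => ?_
        have hkj : κ ≤ j := (hmemF j).mp hj
        exact mul_le_mul_of_nonneg_left (hdesc κ j hkj) (sq_nonneg _)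
    _ = lam κ * ∑ j ∈ F, coef j ^ 2 := by rw [Finset.mul_sum]; exact Finset.sum_congr rfl fun j _ => mul_comm _ _
    _ ≤ lam κ * ∑ j, coef j ^ 2 := by
        refine mul_le_mul_of_nonneg_left ?_ hlamk
        exact Finset.sum_le_sum_of_subset_of_nonneg (Finset.subset_univ F)
          (fun j _ _ => sq_nonneg _)
    _ = lam κ * dotProduct v v := by rw [hPar]
end

section
/- Let S ∈ ℝ^{d×d} be a symmetric matrix and let J be a subset of the index set {1, ..., d}. Let B be the submatrix of S consisting of the rows of S with index not in J (a matrix of size (d−|J|) × d), and let L ∈ ℝ^{d×d} be the matrix defined by L_{ij} = S_{ij} if i ∉ J or j ∉ J, and L_{ij} = 0 if both i ∈ J and j ∈ J (i.e., S with the J×J block zeroed out). Then ‖L‖_op ≤ 2 ‖B‖_op. -/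
open MeasureTheory ProbabilityTheory

lemma opNorm_nonneg' {m n : Type*} [Fintype m] [Fintype n] [DecidableEq n]
    (M : Matrix m n ℝ) : 0 ≤ opNorm M := norm_nonneg _

lemma norm_toEuclideanLin_apply_sq {m n : Type*} [Fintype m] [Fintype n] [DecidableEq n]
    (M : Matrix m n ℝ) (x : EuclideanSpace ℝ n) :
    ‖Matrix.toEuclideanLin M x‖ ^ 2 = ∑ i, (M.mulVec (⇑x) i) ^ 2 := by
  rw [EuclideanSpace.norm_eq, Real.sq_sqrt (by positivity)]
  refine Finset.sum_congr rfl fun i _ => ?_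
  rw [Real.norm_eq_abs, sq_abs]
  congr 1

lemma mulVec_sq_le {m n : Type*} [Fintype m] [Fintype n] [DecidableEq n]
    (M : Matrix m n ℝ) (x : n → ℝ) :
    ∑ i, (M.mulVec x i) ^ 2 ≤ (opNorm M) ^ 2 * ∑ j, (x j) ^ 2 := by
  set v : EuclideanSpace ℝ n := (WithLp.equiv 2 (n → ℝ)).symm x
  have h := (LinearMap.toContinuousLinearMap (Matrix.toEuclideanLin M)).le_opNorm v
  have h2 : ‖Matrix.toEuclideanLin M v‖ ^ 2 ≤ (opNorm M) ^ 2 * ‖v‖ ^ 2 := by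
    rw [← mul_pow]
    exact pow_le_pow_left₀ (norm_nonneg _) h 2
  rw [norm_toEuclideanLin_apply_sq, EuclideanSpace.norm_eq,
    Real.sq_sqrt (by positivity)] at h2
  simpa [v, Real.norm_eq_abs, sq_abs] using h2

lemma opNorm_le_bound' {m n : Type*} [Fintype m] [Fintype n] [DecidableEq n]
    (M : Matrix m n ℝ) (c : ℝ) (hc : 0 ≤ c)
    (h : ∀ x : n → ℝ, ∑ i, (M.mulVec x i) ^ 2 ≤ c ^ 2 * ∑ j, (x j) ^ 2) :
    opNorm M ≤ c := by
  refine ContinuousLinearMap.opNorm_le_bound _ hc fun x => ?_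
  have hx := h (⇑x)
  have h1 : ‖Matrix.toEuclideanLin M x‖ ^ 2 ≤ (c * ‖x‖) ^ 2 := by
    rw [norm_toEuclideanLin_apply_sq, mul_pow, EuclideanSpace.norm_eq,
      Real.sq_sqrt (by positivity)]
    simpa [Real.norm_eq_abs, sq_abs] using hx
  have h2 := Real.sqrt_le_sqrt h1
  rwa [Real.sqrt_sq (norm_nonneg _), Real.sqrt_sq (by positivity)] at h2

lemma opNorm_transpose {m n : Type*} [Fintype m] [Fintype n] [DecidableEq m] [DecidableEq n]
    (M : Matrix m n ℝ) : opNorm M.transpose = opNorm M := by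
  have h1 : M.transpose = M.conjTranspose := by ext i j; simp [Matrix.conjTranspose]
  rw [opNorm, h1, Matrix.toEuclideanLin_conjTranspose_eq_adjoint,
    LinearMap.adjoint_toContinuousLinearMap]
  exact LinearIsometryEquiv.norm_map ContinuousLinearMap.adjoint _

/-- **Block-zeroing step (proof of Theorem 1.3).** Let `S ∈ ℝ^{d×d}` be symmetric and
`J ⊆ {1,…,d}`. Let `B` be the submatrix of rows of `S` with index not in `J`, and let
`L` be `S` with the `J×J` block zeroed out. Then `‖L‖_op ≤ 2 ‖B‖_op`. -/
theorem block_zeroing_opNorm (d : ℕ) (S : Matrix (Fin d) (Fin d) ℝ) (hS : S.IsSymm)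
    (J : Finset (Fin d))
    (B : Matrix {i : Fin d // i ∉ J} (Fin d) ℝ) (hB : ∀ i j, B i j = S i.1 j)
    (L : Matrix (Fin d) (Fin d) ℝ)
    (hL : ∀ i j, L i j = if i ∈ J ∧ j ∈ J then 0 else S i j) :
    opNorm L ≤ 2 * opNorm B := by
  classical
  set L1 : Matrix (Fin d) (Fin d) ℝ := fun i j => if i ∈ J then 0 else S i j with hL1
  set L2 : Matrix (Fin d) (Fin d) ℝ :=
    fun i j => if i ∈ J ∧ j ∉ J then S i j else 0 with hL2
  have hsplit : L = L1 + L2 := by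
    ext i j
    rw [hL i j, Matrix.add_apply]
    by_cases hi : i ∈ J <;> by_cases hj : j ∈ J <;>
      simp [L1, L2, hi, hj]
  have hb1 : opNorm L1 ≤ opNorm B := by
    refine opNorm_le_bound' _ _ (opNorm_nonneg' B) fun x => ?_
    have key : ∑ i, (L1.mulVec x i) ^ 2 = ∑ i, (B.mulVec x i) ^ 2 := by
      have h0 : ∀ i : Fin d, i ∈ J → (L1.mulVec x i) ^ 2 = 0 := by
        intro i hi
        simp [Matrix.mulVec, dotProduct, L1, hi]
      rw [← Finset.sum_subset (Finset.subset_univ Jᶜ)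
        (by intro i _ hi; exact h0 i (by simpa using hi)),
        Finset.sum_subtype (p := fun i => i ∉ J) Jᶜ (by intro i; simp) (fun i => (L1.mulVec x i) ^ 2)]
      refine Finset.sum_congr rfl fun i _ => ?_
      congr 1
      simp [Matrix.mulVec, dotProduct, L1, i.2, hB]
    rw [key]
    exact mulVec_sq_le B x
  have hb2 : opNorm L2 ≤ opNorm B := by
    refine opNorm_le_bound' _ _ (opNorm_nonneg' B) fun x => ?_
    set w : {j : Fin d // j ∉ J} → ℝ := fun j => x j.1 with hw
    have hw2 : ∑ j, (w j) ^ 2 ≤ ∑ j, (x j) ^ 2 := by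
      rw [← Finset.sum_subtype (p := fun i => i ∉ J) Jᶜ (by intro i; simp) (fun j => (x j) ^ 2)]
      exact Finset.sum_le_sum_of_subset_of_nonneg (Finset.subset_univ _)
        (fun i _ _ => sq_nonneg _)
    have key : ∀ i : Fin d, (L2.mulVec x i) ^ 2 ≤ (B.transpose.mulVec w i) ^ 2 := by
      intro i
      by_cases hi : i ∈ J
      · have : L2.mulVec x i = B.transpose.mulVec w i := by
          simp only [Matrix.mulVec, dotProduct, Matrix.transpose_apply]
          rw [← Finset.sum_subset (Finset.subset_univ Jᶜ) (by
            intro j _ hj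
            simp only [Finset.mem_compl, not_not] at hj
            simp [L2, hj]),
            Finset.sum_subtype (p := fun i => i ∉ J) Jᶜ (by intro i; simp)
              (fun j => L2 i j * x j)]
          refine Finset.sum_congr rfl fun j _ => ?_
          have hSsymm : S i j = S j.1 i := by
            conv_lhs => rw [← hS]
            rfl
          simp [L2, hi, j.2, hB, w, hSsymm]
        rw [this]
      · have : L2.mulVec x i = 0 := by
          simp [Matrix.mulVec, dotProduct, L2, hi]
        rw [this]
        simpa using sq_nonneg (B.transpose.mulVec w i)
    calc ∑ i, (L2.mulVec x i) ^ 2 ≤ ∑ i, (B.transpose.mulVec w i) ^ 2 :=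
          Finset.sum_le_sum fun i _ => key i
      _ ≤ (opNorm B.transpose) ^ 2 * ∑ j, (w j) ^ 2 := mulVec_sq_le _ _
      _ = (opNorm B) ^ 2 * ∑ j, (w j) ^ 2 := by rw [opNorm_transpose]
      _ ≤ (opNorm B) ^ 2 * ∑ j, (x j) ^ 2 := by
          exact mul_le_mul_of_nonneg_left hw2 (by positivity)
  have hadd : opNorm L ≤ opNorm L1 + opNorm L2 := by
    rw [hsplit, opNorm]
    rw [map_add (Matrix.toEuclideanLin (𝕜 := ℝ) (m := Fin d) (n := Fin d)),
      map_add LinearMap.toContinuousLinearMap]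
    exact norm_add_le _ _
  linarith
end

section
/- Let n, d be positive integers with d ≥ n², let f > 0, and let A_1, ..., A_n ∈ ℝ^{d×d} be symmetric matrices with ∑_{i=1}^n ‖A_i‖_F² ≤ n f². Then there exists an orthogonal matrix U ∈ ℝ^{d×d} such that, defining Ã_i ∈ ℝ^{n²×n²} to be the top-left n²×n² block of Uᵀ A_i U, for every x ∈ {−1, +1}^n one has | ‖∑_{i=1}^n x_i A_i‖_op − ‖∑_{i=1}^n x_i Ã_i‖_op | ≤ 2 f. -/
open MeasureTheory ProbabilityTheory

open Matrix

noncomputable def en {k : Type*} [Fintype k] (v : k → ℝ) : EuclideanSpace ℝ k :=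
  (WithLp.equiv 2 (k → ℝ)).symm v

lemma norm_en {k : Type*} [Fintype k] (v : k → ℝ) :
    ‖en v‖ = Real.sqrt (∑ i, v i ^ 2) := by
  rw [EuclideanSpace.norm_eq]
  congr 1
  refine Finset.sum_congr rfl fun i _ => ?_
  rw [Real.norm_eq_abs, sq_abs]; rfl

lemma norm_en_sq {k : Type*} [Fintype k] (v : k → ℝ) :
    ‖en v‖ ^ 2 = ∑ i, v i ^ 2 := by
  rw [norm_en, Real.sq_sqrt]; positivity

lemma toCLM_en {k l : Type*} [Fintype k] [Fintype l] [DecidableEq k]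
    (M : Matrix l k ℝ) (v : k → ℝ) :
    (LinearMap.toContinuousLinearMap (Matrix.toEuclideanLin M)) (en v) = en (M *ᵥ v) := by
  simp [en, LinearMap.coe_toContinuousLinearMap', Matrix.toEuclideanLin_apply]

lemma opNorm_le_bound {k l : Type*} [Fintype k] [Fintype l] [DecidableEq k]
    (M : Matrix l k ℝ) {c : ℝ} (hc : 0 ≤ c)
    (h : ∀ v : k → ℝ, ‖en (M *ᵥ v)‖ ≤ c * ‖en v‖) : opNorm M ≤ c := by
  apply ContinuousLinearMap.opNorm_le_bound _ hc
  intro x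
  have : x = en ((WithLp.equiv 2 (k → ℝ)) x) := rfl
  rw [this, toCLM_en]
  exact h _

lemma le_opNorm {k l : Type*} [Fintype k] [Fintype l] [DecidableEq k]
    (M : Matrix l k ℝ) (v : k → ℝ) : ‖en (M *ᵥ v)‖ ≤ opNorm M * ‖en v‖ := by
  rw [← toCLM_en]
  exact ContinuousLinearMap.le_opNorm _ _

lemma dot_self_en {k : Type*} [Fintype k] (v : k → ℝ) : v ⬝ᵥ v = ‖en v‖ ^ 2 := by
  rw [norm_en_sq]; simp [dotProduct, sq]

lemma transpose_bound {k l : Type*} [Fintype k] [Fintype l] [DecidableEq k] [DecidableEq l]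
    (M : Matrix l k ℝ) {c : ℝ} (hc : 0 ≤ c)
    (h : ∀ v : k → ℝ, ‖en (M *ᵥ v)‖ ≤ c * ‖en v‖) (v : l → ℝ) :
    ‖en (Mᵀ *ᵥ v)‖ ≤ c * ‖en v‖ := by
  set u : k → ℝ := Mᵀ *ᵥ v with hu
  have key : ‖en u‖ ^ 2 * ‖en u‖ ^ 2 ≤ (c * ‖en v‖) ^ 2 * ‖en u‖ ^ 2 := by
    have h1 : ‖en u‖ ^ 2 = v ⬝ᵥ (M *ᵥ u) := by
      rw [← dot_self_en, hu, Matrix.mulVec_transpose, Matrix.dotProduct_mulVec]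
    have h2 : (v ⬝ᵥ (M *ᵥ u)) ^ 2 ≤ (∑ i, v i ^ 2) * ∑ i, (M *ᵥ u) i ^ 2 :=
      Finset.sum_mul_sq_le_sq_mul_sq _ _ _
    calc ‖en u‖ ^ 2 * ‖en u‖ ^ 2 = (v ⬝ᵥ (M *ᵥ u)) ^ 2 := by rw [h1]; ring
      _ ≤ (∑ i, v i ^ 2) * ∑ i, (M *ᵥ u) i ^ 2 := h2
      _ = ‖en v‖ ^ 2 * ‖en (M *ᵥ u)‖ ^ 2 := by rw [norm_en_sq, norm_en_sq]
      _ ≤ ‖en v‖ ^ 2 * (c * ‖en u‖) ^ 2 := by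
          apply mul_le_mul_of_nonneg_left _ (by positivity)
          exact pow_le_pow_left₀ (norm_nonneg _) (h u) 2
      _ = (c * ‖en v‖) ^ 2 * ‖en u‖ ^ 2 := by ring
  rcases eq_or_ne (‖en u‖) 0 with h0 | h0
  · rw [h0]; positivity
  · have h3 : ‖en u‖ ^ 2 ≤ (c * ‖en v‖) ^ 2 :=
      le_of_mul_le_mul_right key (by positivity)
    calc ‖en u‖ = Real.sqrt (‖en u‖ ^ 2) := by
          rw [Real.sqrt_sq (norm_nonneg _)]
      _ ≤ Real.sqrt ((c * ‖en v‖) ^ 2) := Real.sqrt_le_sqrt h3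
      _ = c * ‖en v‖ := Real.sqrt_sq (by positivity)

section Pad
variable {m d : ℕ} (hm : m ≤ d)

/-- zero-padding of a vector -/
def pad (w : Fin m → ℝ) : Fin d → ℝ := fun j => if h : j.val < m then w ⟨j.val, h⟩ else 0

lemma pad_castLE (w : Fin m → ℝ) (i : Fin m) : pad (d := d) w (Fin.castLE hm i) = w i := by
  simp [pad]

lemma sum_pad_support (g : Fin d → ℝ) (hg : ∀ j : Fin d, ¬ j.val < m → g j = 0) :
    ∑ j, g j = ∑ i : Fin m, g (Fin.castLE hm i) := by
  have hinj : Function.Injective (Fin.castLE hm) := Fin.castLE_injective hm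
  rw [← Finset.sum_image (fun x _ y _ h => hinj h)]
  apply (Finset.sum_subset (Finset.subset_univ _) _).symm
  intro x _ hx
  apply hg
  intro hlt
  exact hx (Finset.mem_image.2 ⟨⟨x.val, hlt⟩, Finset.mem_univ _, rfl⟩)

lemma norm_en_pad (hm : m ≤ d) (w : Fin m → ℝ) : ‖en (pad (d := d) w)‖ = ‖en w‖ := by
  rw [norm_en, norm_en]
  congr 1
  rw [sum_pad_support hm _ (fun j hj => by simp [pad, hj])]
  exact Finset.sum_congr rfl fun i _ => by rw [pad_castLE]

lemma norm_en_comp_le (v : Fin d → ℝ) : ‖en (v ∘ Fin.castLE hm)‖ ≤ ‖en v‖ := by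
  rw [norm_en, norm_en]
  apply Real.sqrt_le_sqrt
  have hinj : Function.Injective (Fin.castLE hm) := Fin.castLE_injective hm
  calc ∑ i : Fin m, (v (Fin.castLE hm i)) ^ 2
      = ∑ j ∈ Finset.image (Fin.castLE hm) Finset.univ, v j ^ 2 := by
        rw [Finset.sum_image (fun x _ y _ h => hinj h)]
    _ ≤ ∑ j, v j ^ 2 :=
        Finset.sum_le_sum_of_subset_of_nonneg (Finset.subset_univ _)
          (fun _ _ _ => sq_nonneg _)

lemma block_mulVec {T : Matrix (Fin d) (Fin d) ℝ}
    (hT : ∀ i j, ¬ (i.val < m ∧ j.val < m) → T i j = 0) (v : Fin d → ℝ) :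
    T *ᵥ v = pad (d := d) ((T.submatrix (Fin.castLE hm) (Fin.castLE hm)) *ᵥ (v ∘ Fin.castLE hm)) := by
  funext j
  by_cases hj : j.val < m
  · have : pad (d := d) ((T.submatrix (Fin.castLE hm) (Fin.castLE hm)) *ᵥ (v ∘ Fin.castLE hm)) j
        = ((T.submatrix (Fin.castLE hm) (Fin.castLE hm)) *ᵥ (v ∘ Fin.castLE hm)) ⟨j.val, hj⟩ := by
      simp [pad, hj]
    rw [this]
    show ∑ j', T j j' * v j' = ∑ i', T (Fin.castLE hm ⟨j.val, hj⟩) (Fin.castLE hm i') * v (Fin.castLE hm i')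
    have hjj : Fin.castLE hm ⟨j.val, hj⟩ = j := rfl
    rw [hjj]
    exact sum_pad_support hm _ (fun j' hj' => by rw [hT j j' (fun h => hj' h.2), zero_mul])
  · have h1 : pad (d := d) ((T.submatrix (Fin.castLE hm) (Fin.castLE hm)) *ᵥ (v ∘ Fin.castLE hm)) j = 0 := by
      simp [pad, hj]
    rw [h1]
    show ∑ j', T j j' * v j' = 0
    exact Finset.sum_eq_zero fun j' _ => by rw [hT j j' (fun h => hj h.1), zero_mul]

lemma opNorm_block {T : Matrix (Fin d) (Fin d) ℝ}
    (hT : ∀ i j, ¬ (i.val < m ∧ j.val < m) → T i j = 0) :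
    opNorm T = opNorm (T.submatrix (Fin.castLE hm) (Fin.castLE hm)) := by
  set T' := T.submatrix (Fin.castLE hm) (Fin.castLE hm) with hT'
  apply le_antisymm
  · apply opNorm_le_bound _ (norm_nonneg _)
    intro v
    rw [block_mulVec hm hT, norm_en_pad hm]
    calc ‖en (T' *ᵥ (v ∘ Fin.castLE hm))‖ ≤ opNorm T' * ‖en (v ∘ Fin.castLE hm)‖ := le_opNorm _ _
      _ ≤ opNorm T' * ‖en v‖ :=
        mul_le_mul_of_nonneg_left (norm_en_comp_le hm v) (norm_nonneg _)
  · apply opNorm_le_bound _ (norm_nonneg _)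
    intro w
    have hpe : (pad (d := d) w) ∘ Fin.castLE hm = w := funext fun i => pad_castLE hm w i
    have : T *ᵥ pad (d := d) w = pad (d := d) (T' *ᵥ w) := by
      rw [block_mulVec hm hT, hpe]
    calc ‖en (T' *ᵥ w)‖ = ‖en (pad (d := d) (T' *ᵥ w))‖ := (norm_en_pad hm _).symm
      _ = ‖en (T *ᵥ pad (d := d) w)‖ := by rw [this]
      _ ≤ opNorm T * ‖en (pad (d := d) w)‖ := le_opNorm _ _
      _ = opNorm T * ‖en w‖ := by rw [norm_en_pad hm]

end Pad

section Conj
variable {d : ℕ}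

lemma norm_en_mulVec_orth {U : Matrix (Fin d) (Fin d) ℝ} (hU : Uᵀ * U = 1) (v : Fin d → ℝ) :
    ‖en (U *ᵥ v)‖ = ‖en v‖ := by
  have h : (U *ᵥ v) ⬝ᵥ (U *ᵥ v) = v ⬝ᵥ v := by
    rw [Matrix.dotProduct_mulVec, ← Matrix.mulVec_transpose, Matrix.mulVec_mulVec, hU,
      Matrix.one_mulVec]
  have h2 : ‖en (U *ᵥ v)‖ ^ 2 = ‖en v‖ ^ 2 := by rw [← dot_self_en, ← dot_self_en, h]
  calc ‖en (U *ᵥ v)‖ = Real.sqrt (‖en (U *ᵥ v)‖ ^ 2) := (Real.sqrt_sq (norm_nonneg _)).symm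
    _ = Real.sqrt (‖en v‖ ^ 2) := by rw [h2]
    _ = ‖en v‖ := Real.sqrt_sq (norm_nonneg _)

lemma opNorm_conj_le {U T : Matrix (Fin d) (Fin d) ℝ} (hU1 : Uᵀ * U = 1) (hU2 : U * Uᵀ = 1) :
    opNorm (Uᵀ * T * U) ≤ opNorm T := by
  apply opNorm_le_bound _ (norm_nonneg _)
  intro v
  have hUt : (Uᵀ)ᵀ * Uᵀ = 1 := by rw [Matrix.transpose_transpose]; exact hU2
  calc ‖en ((Uᵀ * T * U) *ᵥ v)‖ = ‖en (Uᵀ *ᵥ (T *ᵥ (U *ᵥ v)))‖ := by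
        rw [Matrix.mulVec_mulVec, Matrix.mulVec_mulVec, Matrix.mul_assoc]
    _ = ‖en (T *ᵥ (U *ᵥ v))‖ := norm_en_mulVec_orth hUt _
    _ ≤ opNorm T * ‖en (U *ᵥ v)‖ := le_opNorm _ _
    _ = opNorm T * ‖en v‖ := by rw [norm_en_mulVec_orth hU1]

lemma opNorm_conj {U T : Matrix (Fin d) (Fin d) ℝ} (hU1 : Uᵀ * U = 1) (hU2 : U * Uᵀ = 1) :
    opNorm (Uᵀ * T * U) = opNorm T := by
  apply le_antisymm (opNorm_conj_le hU1 hU2)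
  have h2 : (Uᵀ)ᵀ * (Uᵀ * T * U) * Uᵀ = T := by
    rw [Matrix.transpose_transpose]
    calc U * (Uᵀ * T * U) * Uᵀ = (U * Uᵀ) * T * (U * Uᵀ) := by
          simp only [Matrix.mul_assoc]
      _ = T := by rw [hU2, Matrix.one_mul, Matrix.mul_one]
  have hUt1 : (Uᵀ)ᵀ * Uᵀ = 1 := by rw [Matrix.transpose_transpose]; exact hU2
  have hUt2 : Uᵀ * (Uᵀ)ᵀ = 1 := by rw [Matrix.transpose_transpose]; exact hU1
  calc opNorm T = opNorm ((Uᵀ)ᵀ * (Uᵀ * T * U) * Uᵀ) := by rw [h2]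
    _ ≤ opNorm (Uᵀ * T * U) := opNorm_conj_le hUt1 hUt2

lemma abs_opNorm_sub_opNorm {d' : ℕ} (a b : Matrix (Fin d') (Fin d') ℝ) :
    |opNorm a - opNorm b| ≤ opNorm (a - b) := by
  have h : (LinearMap.toContinuousLinearMap (Matrix.toEuclideanLin (a - b)))
      = LinearMap.toContinuousLinearMap (Matrix.toEuclideanLin a)
        - LinearMap.toContinuousLinearMap (Matrix.toEuclideanLin b) := by
    simp [map_sub]
  rw [opNorm, opNorm, opNorm, h]
  exact abs_norm_sub_norm_le _ _

end Conj


lemma real_conjTranspose {k l : Type*} (A : Matrix k l ℝ) : Aᴴ = Aᵀ := by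
  ext i j; simp [Matrix.conjTranspose_apply]

lemma exists_orth_diag {d : ℕ} (M : Matrix (Fin d) (Fin d) ℝ) (hM : M.IsHermitian) :
    ∃ (U : Matrix (Fin d) (Fin d) ℝ) (μ : Fin d → ℝ), Uᵀ * U = 1 ∧ U * Uᵀ = 1 ∧
      Antitone μ ∧ Uᵀ * M * U = Matrix.diagonal μ := by
  set Vm : Matrix (Fin d) (Fin d) ℝ := (hM.eigenvectorUnitary : Matrix (Fin d) (Fin d) ℝ) with hVm
  have hV1 : Vmᵀ * Vm = 1 := by
    rw [← real_conjTranspose, ← Matrix.star_eq_conjTranspose]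
    exact hM.eigenvectorUnitary.2.1
  have hV2 : Vm * Vmᵀ = 1 := by
    rw [← real_conjTranspose, ← Matrix.star_eq_conjTranspose]
    exact hM.eigenvectorUnitary.2.2
  set lam := hM.eigenvalues with hlam
  set τ : Equiv.Perm (Fin d) := (Fin.revPerm).trans (Tuple.sort lam) with hτ
  have hanti : Antitone (lam ∘ ⇑τ) := by
    have hmono := Tuple.monotone_sort lam
    intro a b hab
    exact hmono (Fin.rev_le_rev.2 hab)
  have hspec : Vmᵀ * M * Vm = Matrix.diagonal lam := by
    have h := hM.spectral_theorem
    have hdiag : Matrix.diagonal (RCLike.ofReal ∘ lam) = Matrix.diagonal lam := by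
      congr 1
    rw [Unitary.conjStarAlgAut_apply] at h
    rw [Matrix.star_eq_conjTranspose, real_conjTranspose, hdiag] at h
    rw [h]
    calc Vmᵀ * (Vm * Matrix.diagonal lam * Vmᵀ) * Vm
        = (Vmᵀ * Vm) * Matrix.diagonal lam * (Vmᵀ * Vm) := by
          simp only [Matrix.mul_assoc]
      _ = Matrix.diagonal lam := by rw [hV1, Matrix.one_mul, Matrix.mul_one]
  refine ⟨Vm.submatrix id ⇑τ, lam ∘ ⇑τ, ?_, ?_, hanti, ?_⟩
  · rw [Matrix.transpose_submatrix]
    have h := Matrix.submatrix_mul_equiv Vmᵀ Vm ⇑τ (Equiv.refl (Fin d)) ⇑τ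
    simp only [Equiv.coe_refl] at h
    rw [h, hV1, Matrix.submatrix_one_equiv]
  · rw [Matrix.transpose_submatrix]
    have h := Matrix.submatrix_mul_equiv Vm Vmᵀ id τ id
    rw [h, hV2]
    simp
  · rw [Matrix.transpose_submatrix]
    have h1 := Matrix.submatrix_mul_equiv M Vm id (Equiv.refl (Fin d)) ⇑τ
    simp only [Equiv.coe_refl] at h1
    have h2 : M.submatrix id id = M := Matrix.submatrix_id_id M
    rw [h2] at h1
    have h3 := Matrix.submatrix_mul_equiv Vmᵀ (M * Vm) ⇑τ (Equiv.refl (Fin d)) ⇑τ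
    simp only [Equiv.coe_refl] at h3
    rw [Matrix.mul_assoc, h1, h3, ← Matrix.mul_assoc, hspec,
      Matrix.submatrix_diagonal_equiv]


lemma le_of_sq_le_sq' {a b : ℝ} (ha : 0 ≤ a) (hb : 0 ≤ b) (h : a ^ 2 ≤ b ^ 2) : a ≤ b := by
  calc a = Real.sqrt (a ^ 2) := (Real.sqrt_sq ha).symm
    _ ≤ Real.sqrt (b ^ 2) := Real.sqrt_le_sqrt h
    _ = b := Real.sqrt_sq hb

lemma my_sum_mulVec {k l ι : Type*} [Fintype k] [Fintype l] (s : Finset ι)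
    (C : ι → Matrix l k ℝ) (v : k → ℝ) :
    (∑ i ∈ s, C i) *ᵥ v = ∑ i ∈ s, (C i *ᵥ v) := by
  funext j
  simp only [Matrix.mulVec, dotProduct, Matrix.sum_apply, Finset.sum_apply,
    Finset.sum_mul]
  rw [Finset.sum_comm]

lemma my_sum_dotProduct {k ι : Type*} [Fintype k] (s : Finset ι)
    (w : ι → (k → ℝ)) (v : k → ℝ) :
    (∑ i ∈ s, w i) ⬝ᵥ v = ∑ i ∈ s, (w i ⬝ᵥ v) := by
  simp only [dotProduct, Finset.sum_apply, Finset.sum_mul]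
  rw [Finset.sum_comm]

lemma submatrix_sum_smul {d m n' : ℕ} (hm : m ≤ d) (x : Fin n' → ℝ)
    (C : Fin n' → Matrix (Fin d) (Fin d) ℝ) :
    (∑ i, x i • C i).submatrix (Fin.castLE hm) (Fin.castLE hm)
      = ∑ i, x i • (C i).submatrix (Fin.castLE hm) (Fin.castLE hm) := by
  ext a b
  simp [Matrix.sum_apply]


open Matrix in
/-- **Dimension reduction (proof of Theorem 1.3).** For `d ≥ n²`, `f > 0`, and symmetric
matrices `A 1, …, A n ∈ ℝ^{d×d}` with `∑ ‖A i‖_F² ≤ n f²`, there is an orthogonal matrix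
`U` such that, with `Ã i` the top-left `n²×n²` block of `Uᵀ A i U`, for every sign
vector `x ∈ {±1}ⁿ` one has `|‖∑ x i • A i‖_op - ‖∑ x i • Ã i‖_op| ≤ 2 f`. -/
theorem dimension_reduction (n d : ℕ) (hn : 0 < n) (hd : n ^ 2 ≤ d)
    (f : ℝ) (hf : 0 < f)
    (A : Fin n → Matrix (Fin d) (Fin d) ℝ) (hsymm : ∀ i, (A i).IsSymm)
    (hF : ∑ i, frobNormSq (A i) ≤ (n : ℝ) * f ^ 2) :
    ∃ U : Matrix (Fin d) (Fin d) ℝ, Uᵀ * U = 1 ∧ U * Uᵀ = 1 ∧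
      ∀ x : Fin n → ℝ, (∀ i, x i = 1 ∨ x i = -1) →
        |opNorm (∑ i, x i • A i) -
          opNorm (∑ i, x i •
            ((Uᵀ * A i * U).submatrix (Fin.castLE hd) (Fin.castLE hd)))| ≤ 2 * f := by
  classical
  set M : Matrix (Fin d) (Fin d) ℝ := ∑ i, A i * A i with hM
  have hMherm : M.IsHermitian := by
    rw [Matrix.IsHermitian, real_conjTranspose, hM]
    rw [Matrix.transpose_sum]
    refine Finset.sum_congr rfl fun i _ => ?_
    rw [Matrix.transpose_mul, (hsymm i).eq]
  obtain ⟨U, μ, hU1, hU2, hanti, hdiagM⟩ := exists_orth_diag M hMherm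
  refine ⟨U, hU1, hU2, ?_⟩
  set B : Fin n → Matrix (Fin d) (Fin d) ℝ := fun i => Uᵀ * A i * U with hB
  have hBsymm : ∀ i, (B i)ᵀ = B i := by
    intro i
    rw [hB]
    simp only [Matrix.transpose_mul, Matrix.transpose_transpose, (hsymm i).eq]
    rw [Matrix.mul_assoc]
  have hBsum : ∑ i, B i * B i = Matrix.diagonal μ := by
    rw [← hdiagM, hM, Matrix.mul_sum, Matrix.sum_mul]
    refine Finset.sum_congr rfl fun i _ => ?_
    calc B i * B i = Uᵀ * A i * (U * Uᵀ) * A i * U := by simp only [hB, Matrix.mul_assoc]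
      _ = Uᵀ * (A i * A i) * U := by rw [hU2]; simp only [Matrix.mul_assoc, Matrix.one_mul]
      _ = Uᵀ * (A i * A i) * U := by simp only [Matrix.mul_assoc]
  -- nonnegativity of μ
  have hμ0 : ∀ j, 0 ≤ μ j := by
    intro j
    have h1 : μ j = (∑ i, B i * B i) j j := by rw [hBsum, Matrix.diagonal_apply_eq]
    have h2 : (∑ i, B i * B i) j j = ∑ i, ∑ k, (B i) k j ^ 2 := by
      rw [Matrix.sum_apply]
      refine Finset.sum_congr rfl fun i _ => ?_
      rw [Matrix.mul_apply]
      refine Finset.sum_congr rfl fun k _ => ?_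
      have h := congrFun (congrFun (hBsymm i) k) j
      rw [Matrix.transpose_apply] at h
      rw [h]; ring
    rw [h1, h2]
    positivity
  -- trace bound
  have htr : ∑ j, μ j ≤ (n : ℝ) * f ^ 2 := by
    have h1 : ∑ j, μ j = Matrix.trace (Matrix.diagonal μ) := by
      rw [Matrix.trace_diagonal]
    have h2 : Matrix.trace (Uᵀ * M * U) = Matrix.trace M := by
      rw [Matrix.trace_mul_cycle, hU2, Matrix.one_mul]
    have h3 : Matrix.trace M = ∑ i, frobNormSq (A i) := by
      rw [hM, Matrix.trace_sum]
      refine Finset.sum_congr rfl fun i _ => ?_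
      rw [Matrix.trace]
      simp only [frobNormSq]
      refine Finset.sum_congr rfl fun j _ => ?_
      rw [Matrix.diag_apply, Matrix.mul_apply]
      refine Finset.sum_congr rfl fun k _ => ?_
      have h := congrFun (congrFun ((hsymm i).eq) j) k
      rw [Matrix.transpose_apply] at h
      rw [← h]; ring
    rw [h1, ← hdiagM, h2, h3]
    exact hF
  -- tail bound
  have htail : ∀ j : Fin d, n ^ 2 ≤ j.val → μ j ≤ f ^ 2 / n := by
    intro j hj
    set s : Finset (Fin d) := Finset.univ.filter (fun k : Fin d => k.val < n ^ 2) with hs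
    have hcard : s.card = n ^ 2 := by
      have himg : s = Finset.image (Fin.castLE hd) Finset.univ := by
        ext k
        simp only [hs, Finset.mem_filter, Finset.mem_univ, true_and, Finset.mem_image]
        constructor
        · intro hk; exact ⟨⟨k.val, hk⟩, rfl⟩
        · rintro ⟨i, rfl⟩; exact i.isLt
      rw [himg, Finset.card_image_of_injective _ (Fin.castLE_injective hd)]
      simp
    have hlow : ∀ k ∈ s, μ j ≤ μ k := by
      intro k hk
      rw [hs, Finset.mem_filter] at hk
      exact hanti (le_of_lt (Fin.lt_def.2 (lt_of_lt_of_le hk.2 hj)))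
    have h1 : (s.card : ℝ) * μ j ≤ ∑ k ∈ s, μ k := by
      calc (s.card : ℝ) * μ j = ∑ _k ∈ s, μ j := by rw [Finset.sum_const, nsmul_eq_mul]
        _ ≤ ∑ k ∈ s, μ k := Finset.sum_le_sum hlow
    have h2 : ∑ k ∈ s, μ k ≤ ∑ k, μ k :=
      Finset.sum_le_sum_of_subset_of_nonneg (Finset.subset_univ _) (fun k _ _ => hμ0 k)
    have h3 : ((n : ℝ) ^ 2) * μ j ≤ (n : ℝ) * f ^ 2 := by
      have := le_trans (le_trans h1 h2) htr
      rwa [hcard, Nat.cast_pow] at this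
    have hn' : (0 : ℝ) < n := by exact_mod_cast hn
    have h4 : (n:ℝ) * ((n:ℝ) * μ j) ≤ (n:ℝ) * f ^ 2 := by nlinarith [h3]
    have h5 : (n:ℝ) * μ j ≤ f ^ 2 := le_of_mul_le_mul_left h4 hn'
    rw [le_div_iff₀ hn']
    linarith
  intro x hx
  have hx2 : ∀ i, x i ^ 2 = 1 := by
    intro i; rcases hx i with h | h <;> rw [h] <;> norm_num
  set SA := ∑ i, x i • A i with hSA
  set S := ∑ i, x i • B i with hSdef
  have hconj : Uᵀ * SA * U = S := by
    rw [hSA, hSdef, Matrix.mul_sum, Matrix.sum_mul]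
    refine Finset.sum_congr rfl fun i _ => ?_
    rw [mul_smul_comm, smul_mul_assoc]
  have hSsymm : Sᵀ = S := by
    rw [hSdef, Matrix.transpose_sum]
    refine Finset.sum_congr rfl fun i _ => ?_
    rw [Matrix.transpose_smul, hBsymm]
  have hQform : ∀ v : Fin d → ℝ, ∑ i, ∑ k, ((B i *ᵥ v) k) ^ 2 = ∑ j, μ j * v j ^ 2 := by
    intro v
    have h1 : ∀ i : Fin n, ∑ k, ((B i *ᵥ v) k) ^ 2 = ((B i * B i) *ᵥ v) ⬝ᵥ v := by
      intro i
      have e1 : ∑ k, ((B i *ᵥ v) k) ^ 2 = (B i *ᵥ v) ⬝ᵥ (B i *ᵥ v) := by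
        simp [dotProduct, sq]
      rw [e1, Matrix.dotProduct_mulVec]
      congr 1
      rw [← Matrix.mulVec_transpose, hBsymm i, Matrix.mulVec_mulVec]
    calc ∑ i, ∑ k, ((B i *ᵥ v) k) ^ 2 = ∑ i, ((B i * B i) *ᵥ v) ⬝ᵥ v :=
          Finset.sum_congr rfl fun i _ => h1 i
      _ = ((∑ i, B i * B i) *ᵥ v) ⬝ᵥ v := by
          rw [my_sum_mulVec, my_sum_dotProduct]
      _ = (Matrix.diagonal μ *ᵥ v) ⬝ᵥ v := by rw [hBsum]
      _ = ∑ j, μ j * v j ^ 2 := by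
          simp only [dotProduct, Matrix.mulVec_diagonal]
          exact Finset.sum_congr rfl fun j _ => by ring
  have hSv : ∀ v : Fin d → ℝ, ‖en (S *ᵥ v)‖ ^ 2 ≤ (n : ℝ) * ∑ j, μ j * v j ^ 2 := by
    intro v
    rw [norm_en_sq]
    have hSv0 : S *ᵥ v = ∑ i, x i • (B i *ᵥ v) := by
      rw [hSdef, my_sum_mulVec]
      exact Finset.sum_congr rfl fun i _ => Matrix.smul_mulVec _ _ _
    have hptw : ∀ k, ((S *ᵥ v) k) ^ 2 ≤ (n : ℝ) * ∑ i, ((B i *ᵥ v) k) ^ 2 := by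
      intro k
      have e1 : (S *ᵥ v) k = ∑ i, x i * (B i *ᵥ v) k := by
        rw [hSv0]; simp [Finset.sum_apply]
      rw [e1]
      calc (∑ i, x i * (B i *ᵥ v) k) ^ 2
          ≤ (∑ i, (x i) ^ 2) * ∑ i, ((B i *ᵥ v) k) ^ 2 :=
            Finset.sum_mul_sq_le_sq_mul_sq _ _ _
        _ = (n : ℝ) * ∑ i, ((B i *ᵥ v) k) ^ 2 := by
            congr 1
            calc ∑ i, (x i) ^ 2 = ∑ _i : Fin n, (1 : ℝ) :=
                  Finset.sum_congr rfl fun i _ => hx2 i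
              _ = (n : ℝ) := by simp
    calc ∑ k, ((S *ᵥ v) k) ^ 2 ≤ ∑ k, ((n : ℝ) * ∑ i, ((B i *ᵥ v) k) ^ 2) :=
          Finset.sum_le_sum fun k _ => hptw k
      _ = (n : ℝ) * ∑ i, ∑ k, ((B i *ᵥ v) k) ^ 2 := by
          rw [← Finset.mul_sum, Finset.sum_comm]
      _ = (n : ℝ) * ∑ j, μ j * v j ^ 2 := by rw [hQform]
  -- projections
  set pind : Fin d → ℝ := fun j => if j.val < n ^ 2 then 1 else 0 with hpind
  set Pm := Matrix.diagonal pind with hPm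
  set Qm := Matrix.diagonal (fun j => 1 - pind j) with hQm
  have hPQ : Pm + Qm = 1 := by
    rw [hPm, hQm, Matrix.diagonal_add, ← Matrix.diagonal_one]
    congr 1
    funext j
    ring
  have hn' : (0 : ℝ) < n := by exact_mod_cast hn
  have hSQ : ∀ v : Fin d → ℝ, ‖en ((S * Qm) *ᵥ v)‖ ≤ f * ‖en v‖ := by
    intro v
    apply le_of_sq_le_sq' (norm_nonneg _) (by positivity)
    rw [← Matrix.mulVec_mulVec]
    calc ‖en (S *ᵥ (Qm *ᵥ v))‖ ^ 2 ≤ (n : ℝ) * ∑ j, μ j * ((Qm *ᵥ v) j) ^ 2 := hSv _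
      _ ≤ (n : ℝ) * ∑ j, (f ^ 2 / n) * (v j) ^ 2 := by
          apply mul_le_mul_of_nonneg_left _ (le_of_lt hn')
          apply Finset.sum_le_sum
          intro j _
          rw [hQm, Matrix.mulVec_diagonal]
          by_cases hj : j.val < n ^ 2
          · have e : ((1 : ℝ) - pind j) * v j = 0 := by simp [hpind, hj]
            rw [e]
            have e2 : μ j * (0 : ℝ) ^ 2 = 0 := by ring
            rw [e2]
            positivity
          · have e : ((1 : ℝ) - pind j) * v j = v j := by simp [hpind, hj]
            rw [e]
            exact mul_le_mul_of_nonneg_right (htail j (Nat.le_of_not_lt hj)) (sq_nonneg _)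
      _ = (f * ‖en v‖) ^ 2 := by
          rw [← Finset.mul_sum, mul_pow, norm_en_sq]
          field_simp
  have hQS : ∀ v : Fin d → ℝ, ‖en ((Qm * S) *ᵥ v)‖ ≤ f * ‖en v‖ := by
    intro v
    have ht : (S * Qm)ᵀ = Qm * S := by
      rw [Matrix.transpose_mul, hSsymm, hQm, Matrix.diagonal_transpose]
    rw [← ht]
    exact transpose_bound _ hf.le hSQ v
  have hsplit : S - Pm * S * Pm = Pm * (S * Qm) + Qm * S := by
    have h1 : Qm = 1 - Pm := by rw [← hPQ]; abel
    rw [h1]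
    noncomm_ring
  have hPcontr : ∀ w : Fin d → ℝ, ‖en (Pm *ᵥ w)‖ ≤ ‖en w‖ := by
    intro w
    rw [norm_en, norm_en]
    apply Real.sqrt_le_sqrt
    apply Finset.sum_le_sum
    intro j _
    rw [hPm, Matrix.mulVec_diagonal]
    by_cases hj : j.val < n ^ 2
    · simp [hpind, hj]
    · have e : pind j * w j = 0 := by simp [hpind, hj]
      rw [e]
      simpa using sq_nonneg (w j)
  have hdiff : opNorm (S - Pm * S * Pm) ≤ 2 * f := by
    apply opNorm_le_bound _ (by positivity)
    intro v
    rw [hsplit, Matrix.add_mulVec]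
    have hen : en ((Pm * (S * Qm)) *ᵥ v + (Qm * S) *ᵥ v)
        = en ((Pm * (S * Qm)) *ᵥ v) + en ((Qm * S) *ᵥ v) := rfl
    rw [hen]
    calc ‖en ((Pm * (S * Qm)) *ᵥ v) + en ((Qm * S) *ᵥ v)‖
        ≤ ‖en ((Pm * (S * Qm)) *ᵥ v)‖ + ‖en ((Qm * S) *ᵥ v)‖ := norm_add_le _ _
      _ ≤ f * ‖en v‖ + f * ‖en v‖ := by
          apply add_le_add _ (hQS v)
          calc ‖en ((Pm * (S * Qm)) *ᵥ v)‖ = ‖en (Pm *ᵥ ((S * Qm) *ᵥ v))‖ := by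
                rw [Matrix.mulVec_mulVec]
            _ ≤ ‖en ((S * Qm) *ᵥ v)‖ := hPcontr _
            _ ≤ f * ‖en v‖ := hSQ v
      _ = 2 * f * ‖en v‖ := by ring
  have hzero : ∀ i j : Fin d, ¬ (i.val < n ^ 2 ∧ j.val < n ^ 2) → (Pm * S * Pm) i j = 0 := by
    intro i j hij
    have he : (Pm * S * Pm) i j = pind i * S i j * pind j := by
      rw [hPm, Matrix.mul_diagonal, Matrix.diagonal_mul]
    rw [he]
    rcases not_and_or.1 hij with h | h
    · simp [hpind, h]
    · simp [hpind, h]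
  have hsub : (Pm * S * Pm).submatrix (Fin.castLE hd) (Fin.castLE hd)
      = S.submatrix (Fin.castLE hd) (Fin.castLE hd) := by
    ext i j
    rw [Matrix.submatrix_apply, Matrix.submatrix_apply, hPm, Matrix.mul_diagonal,
      Matrix.diagonal_mul]
    have hi : ((Fin.castLE hd i) : ℕ) < n ^ 2 := i.isLt
    have hj : ((Fin.castLE hd j) : ℕ) < n ^ 2 := j.isLt
    simp [hpind, hi, hj]
  have hSsub : (∑ i, x i • ((B i).submatrix (Fin.castLE hd) (Fin.castLE hd)))
      = S.submatrix (Fin.castLE hd) (Fin.castLE hd) := by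
    rw [hSdef, submatrix_sum_smul hd x B]
  have e1 : opNorm SA = opNorm S := by rw [← hconj]; exact (opNorm_conj hU1 hU2).symm
  have e2 : opNorm (∑ i, x i • ((B i).submatrix (Fin.castLE hd) (Fin.castLE hd)))
      = opNorm (Pm * S * Pm) := by
    rw [hSsub, ← hsub, ← opNorm_block hd hzero]
  rw [e1, e2]
  calc |opNorm S - opNorm (Pm * S * Pm)| ≤ opNorm (S - Pm * S * Pm) :=
        abs_opNorm_sub_opNorm _ _
    _ ≤ 2 * f := hdiff
end
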